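/- arXiv:1603.01100 — 3 statements merged into one kernel-verified Lean document; each statement's English description precedes it below -/
import Mathlib

section
/- Let D and X be Banach spaces with D continuously and densely embedded in X, and let A : [0,T] → L(D,X) be bounded and strongly measurable with ‖A(t)x‖_X ≤ C‖x‖_D for all x ∈ D and a.e. t. Let A_Λ^S be the step approximation by interval averages over a uniform subdivision Λ. If u_Λ → u in L^p(0,T; D) for some 1 ≤ p < ∞, then A_Λ^S(·)u_Λ(·) → A(·)u(·) in L^p(0,T; X) as |Λ| → 0. -/
open MeasureTheory Filter intervalIntegral

noncomputable section

variable {X : Type*} [NormedAddCommGroup X] [NormedSpace ℝ X] [CompleteSpace X]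

/-- Average of `f` over the `k`-th interval of the uniform subdivision of `[0,T]`
into `n+1` subintervals. -/
def uavg (f : ℝ → X) (T : ℝ) (n k : ℕ) : X :=
  ((n + 1 : ℝ) / T) • ∫ r in ((k : ℝ) * (T / (n + 1)))..(((k : ℝ) + 1) * (T / (n + 1))), f r

/-- Index of the subinterval containing `t` (clamped to `n`). -/
def uidx (T : ℝ) (n : ℕ) (t : ℝ) : ℕ := min ⌊t * (n + 1) / T⌋₊ n

/-- Piecewise constant (step) approximation of `f` by interval averages. -/
def stepApprox (f : ℝ → X) (T : ℝ) (n : ℕ) (t : ℝ) : X := uavg f T n (uidx T n t)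

/-- The step approximation `A_Λ^S(t)x` of a strongly measurable operator family
`A : [0,T] → L(D,X)`, applied to `x ∈ D`. -/
def opStep {D : Type*} [NormedAddCommGroup D] [NormedSpace ℝ D]
    (A : ℝ → D →L[ℝ] X) (T : ℝ) (n : ℕ) (t : ℝ) (x : D) : X :=
  stepApprox (fun r => A r x) T n t

set_option linter.unusedSectionVars false
set_option linter.unusedVariables false
set_option maxHeartbeats 1000000

namespace OpStepAux

variable {D : Type*} [NormedAddCommGroup D] [NormedSpace ℝ D]


lemma uidx_le (T : ℝ) (n : ℕ) (t : ℝ) : uidx T n t ≤ n := min_le_right _ _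

lemma monotone_uidx {T : ℝ} (hT : 0 < T) (n : ℕ) : Monotone (uidx T n) := by
  intro a b hab
  exact min_le_min (Nat.floor_mono (by gcongr)) le_rfl

lemma measurable_uidx {T : ℝ} (hT : 0 < T) (n : ℕ) : Measurable (uidx T n) :=
  (monotone_uidx hT n).measurable

lemma endpoint_nonneg (T : ℝ) (hT : 0 < T) (n k : ℕ) : 0 ≤ (k : ℝ) * (T / (n + 1)) := by
  positivity

lemma endpoint_le (T : ℝ) (hT : 0 < T) {n k : ℕ} (hk : k ≤ n) :
    ((k : ℝ) + 1) * (T / (n + 1)) ≤ T := by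
  have h1 : ((k : ℝ) + 1) ≤ (n : ℝ) + 1 := by exact_mod_cast Nat.succ_le_succ hk
  calc ((k : ℝ) + 1) * (T / (n + 1)) ≤ ((n : ℝ) + 1) * (T / (n + 1)) := by
        have : (0:ℝ) < T / (n+1) := by positivity
        nlinarith
    _ = T := by field_simp

lemma endpoint_mono (T : ℝ) (hT : 0 < T) (n k : ℕ) :
    (k : ℝ) * (T / (n + 1)) ≤ ((k : ℝ) + 1) * (T / (n + 1)) := by
  have : (0:ℝ) < T / (n+1) := by positivity
  nlinarith

lemma uidx_def (T : ℝ) (n : ℕ) (t : ℝ) :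
    uidx T n t = min ⌊t * ((n : ℝ) + 1) / T⌋₊ n := by
  unfold uidx; norm_num

lemma uidx_spec {T : ℝ} (hT : 0 < T) {t : ℝ} (ht0 : 0 < t) (htT : t ≤ T) (n : ℕ) :
    (uidx T n t : ℝ) * (T / (n + 1)) ≤ t ∧ t ≤ ((uidx T n t : ℝ) + 1) * (T / (n + 1)) := by
  have hnp : (0:ℝ) < (n : ℝ) + 1 := by positivity
  have hpos : (0:ℝ) < T / (n + 1) := by positivity
  have hnn : (0:ℝ) ≤ t * ((n:ℝ) + 1) / T := by positivity
  rw [uidx_def]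
  set m := ⌊t * ((n:ℝ) + 1) / T⌋₊ with hm
  constructor
  · have h1 : ((min m n : ℕ) : ℝ) ≤ t * ((n:ℝ) + 1) / T := by
      calc ((min m n : ℕ) : ℝ) ≤ (m : ℝ) := by exact_mod_cast min_le_left m n
        _ ≤ t * ((n:ℝ) + 1) / T := Nat.floor_le hnn
    calc ((min m n : ℕ) : ℝ) * (T / (n + 1)) ≤ (t * ((n:ℝ) + 1) / T) * (T / (n + 1)) :=
          mul_le_mul_of_nonneg_right h1 hpos.le
      _ = t := by field_simp
  · rcases le_or_gt m n with hc | hc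
    · rw [min_eq_left hc]
      have h2 : t * ((n:ℝ) + 1) / T < (m : ℝ) + 1 := Nat.lt_floor_add_one _
      calc t = (t * ((n:ℝ) + 1) / T) * (T / (n + 1)) := by field_simp
        _ ≤ ((m:ℝ) + 1) * (T / (n + 1)) := mul_le_mul_of_nonneg_right h2.le hpos.le
    · rw [min_eq_right hc.le]
      calc t ≤ T := htT
        _ = ((n : ℝ) + 1) * (T / (n + 1)) := by field_simp

variable {T : ℝ} {A : ℝ → D →L[ℝ] X} {C : ℝ}

lemma intInt (hT : 0 < T) (hmeas : ∀ x : D, StronglyMeasurable fun t => A t x)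
    (hbd : ∀ t ∈ Set.Icc (0 : ℝ) T, ∀ x : D, ‖A t x‖ ≤ C * ‖x‖) (x : D)
    {a b : ℝ} (ha : 0 ≤ a) (hb : b ≤ T) (hab : a ≤ b) :
    IntervalIntegrable (fun r => A r x) volume a b := by
  rw [intervalIntegrable_iff_integrableOn_Ioc_of_le hab]
  refine Integrable.mono' (g := fun _ => C * ‖x‖)
    (integrableOn_const measure_Ioc_lt_top.ne)
    ((hmeas x).aestronglyMeasurable.restrict) ?_
  filter_upwards [ae_restrict_mem measurableSet_Ioc] with r hr
  exact hbd r ⟨ha.trans hr.1.le, hr.2.trans hb⟩ x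

lemma opStep_norm_le (hT : 0 < T)
    (hbd : ∀ t ∈ Set.Icc (0 : ℝ) T, ∀ x : D, ‖A t x‖ ≤ C * ‖x‖)
    (n : ℕ) (t : ℝ) (x : D) : ‖opStep A T n t x‖ ≤ C * ‖x‖ := by
  set k := uidx T n t with hk
  have hkn : k ≤ n := uidx_le T n t
  have hpos : (0:ℝ) < T / (n + 1) := by positivity
  have h1 : ∀ r ∈ Set.uIoc ((k:ℝ) * (T / (n+1))) (((k:ℝ) + 1) * (T / (n+1))),
      ‖A r x‖ ≤ C * ‖x‖ := by
    intro r hr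
    rw [Set.uIoc_of_le (endpoint_mono T hT n k)] at hr
    refine hbd r ⟨?_, ?_⟩ x
    · exact le_trans (endpoint_nonneg T hT n k) hr.1.le
    · exact hr.2.trans (endpoint_le T hT hkn)
  have h2 := intervalIntegral.norm_integral_le_of_norm_le_const h1
  have hba : |((k:ℝ) + 1) * (T / (n+1)) - (k:ℝ) * (T / (n+1))| = T / (n + 1) := by
    rw [abs_of_nonneg] <;> [skip; linarith [endpoint_mono T hT n k]]
    ring
  rw [hba] at h2
  show ‖((n + 1 : ℝ) / T) • _‖ ≤ C * ‖x‖
  rw [norm_smul, Real.norm_eq_abs, abs_of_nonneg (by positivity)]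
  calc ((n:ℝ) + 1) / T * ‖_‖ ≤ ((n:ℝ) + 1) / T * (C * ‖x‖ * (T / (n + 1))) := by
        apply mul_le_mul_of_nonneg_left h2 (by positivity)
    _ = C * ‖x‖ := by field_simp


-- integrability over the k-th subinterval
lemma intIntK (hT : 0 < T) (hmeas : ∀ x : D, StronglyMeasurable fun t => A t x)
    (hbd : ∀ t ∈ Set.Icc (0 : ℝ) T, ∀ x : D, ‖A t x‖ ≤ C * ‖x‖) (x : D)
    {n k : ℕ} (hk : k ≤ n) :
    IntervalIntegrable (fun r => A r x) volume ((k:ℝ) * (T / (n+1)))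
      (((k:ℝ) + 1) * (T / (n+1))) :=
  intInt hT hmeas hbd x (endpoint_nonneg T hT n k) (endpoint_le T hT hk)
    (endpoint_mono T hT n k)

lemma opStep_sub (hT : 0 < T) (hmeas : ∀ x : D, StronglyMeasurable fun t => A t x)
    (hbd : ∀ t ∈ Set.Icc (0 : ℝ) T, ∀ x : D, ‖A t x‖ ≤ C * ‖x‖)
    (n : ℕ) (t : ℝ) (x y : D) :
    opStep A T n t (x - y) = opStep A T n t x - opStep A T n t y := by
  unfold opStep stepApprox uavg
  rw [← smul_sub, ← intervalIntegral.integral_sub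
    (intIntK hT hmeas hbd x (uidx_le T n t)) (intIntK hT hmeas hbd y (uidx_le T n t))]
  simp only [map_sub]

lemma opStep_add (hT : 0 < T) (hmeas : ∀ x : D, StronglyMeasurable fun t => A t x)
    (hbd : ∀ t ∈ Set.Icc (0 : ℝ) T, ∀ x : D, ‖A t x‖ ≤ C * ‖x‖)
    (n : ℕ) (t : ℝ) (x y : D) :
    opStep A T n t (x + y) = opStep A T n t x + opStep A T n t y := by
  unfold opStep stepApprox uavg
  rw [← smul_add, ← intervalIntegral.integral_add
    (intIntK hT hmeas hbd x (uidx_le T n t)) (intIntK hT hmeas hbd y (uidx_le T n t))]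
  simp only [map_add]

lemma opStep_smul (n : ℕ) (t : ℝ) (c : ℝ) (x : D) :
    opStep A T n t (c • x) = c • opStep A T n t x := by
  unfold opStep stepApprox uavg
  have h : (fun r => A r (c • x)) = fun r => c • A r x := by
    funext r; exact (A r).map_smul c x
  rw [h, intervalIntegral.integral_smul, smul_comm]

lemma opStep_zero (n : ℕ) (t : ℝ) : opStep A T n t (0 : D) = 0 := by
  unfold opStep stepApprox uavg
  simp

lemma continuous_opStep (hT : 0 < T) (hmeas : ∀ x : D, StronglyMeasurable fun t => A t x)
    (hbd : ∀ t ∈ Set.Icc (0 : ℝ) T, ∀ x : D, ‖A t x‖ ≤ C * ‖x‖) (n : ℕ) (t : ℝ) :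
    Continuous fun x : D => opStep A T n t x :=
  continuous_of_linear_of_bound (opStep_add hT hmeas hbd n t) (opStep_smul n t)
    (opStep_norm_le hT hbd n t)

lemma stronglyMeasurable_opStep (hT : 0 < T) (n : ℕ) (x : D) :
    StronglyMeasurable fun t => opStep A T n t x := by
  have heq : (fun t => opStep A T n t x)
      = (fun k => uavg (fun r => A r x) T n k) ∘ (uidx T n) := rfl
  rw [heq]
  borelize X
  refine stronglyMeasurable_iff_measurable_separable.2 ⟨?_, ?_⟩
  · exact measurable_from_nat.comp (measurable_uidx hT n)
  · exact ((Set.countable_range _).mono (Set.range_comp_subset_range _ _)).isSeparable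

lemma stronglyMeasurable_apply_simple {B : ℝ → D → X}
    (hB : ∀ x : D, StronglyMeasurable fun t => B t x) (s : SimpleFunc ℝ D) :
    StronglyMeasurable fun t => B t (s t) := by
  have heq : (fun t => B t (s t)) = fun t =>
      ∑ c ∈ s.range, Set.indicator (s ⁻¹' {c}) (fun t' => B t' c) t := by
    funext t
    rw [Finset.sum_eq_single_of_mem (s t) (s.mem_range_self t)]
    · rw [Set.indicator_of_mem (by simp : t ∈ s ⁻¹' {s t})]
    · intro c hc hne
      exact Set.indicator_of_notMem (by simp [hne.symm]) _
  rw [heq]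
  exact Finset.stronglyMeasurable_fun_sum _ fun c _ =>
    (hB c).indicator (s.measurableSet_preimage _)

lemma aestronglyMeasurable_apply {B : ℝ → D → X}
    (hB : ∀ x : D, StronglyMeasurable fun t => B t x) (hBc : ∀ t, Continuous (B t))
    {μ : Measure ℝ} {v : ℝ → D} (hv : AEStronglyMeasurable v μ) :
    AEStronglyMeasurable (fun t => B t (v t)) μ := by
  obtain ⟨g, hg, hvg⟩ := hv
  refine ⟨fun t => B t (g t), ?_, ?_⟩
  · apply stronglyMeasurable_of_tendsto atTop
      (fun j => stronglyMeasurable_apply_simple hB (hg.approx j))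
    rw [tendsto_pi_nhds]
    intro t
    exact ((hBc t).tendsto (g t)).comp (hg.tendsto_approx t)
  · filter_upwards [hvg] with t ht
    rw [ht]

lemma tendsto_eLpNorm_zero {α : Type*} [MeasurableSpace α] {μ : Measure α} [IsFiniteMeasure μ]
    {F : ℕ → α → X} (hF : ∀ n, AEStronglyMeasurable (F n) μ) {M : ℝ}
    (hbound : ∀ n, ∀ᵐ t ∂μ, ‖F n t‖ ≤ M)
    (hae : ∀ᵐ t ∂μ, Tendsto (fun n => F n t) atTop (nhds 0))
    {p : ENNReal} (hp0 : p ≠ 0) (hp : p ≠ ⊤) :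
    Tendsto (fun n => eLpNorm (F n) p μ) atTop (nhds 0) := by
  have hq : 0 < p.toReal := ENNReal.toReal_pos hp0 hp
  have hL : Tendsto (fun n => ∫⁻ t, (‖F n t‖₊ : ENNReal) ^ p.toReal ∂μ) atTop (nhds 0) := by
    have h0 : (0 : ENNReal) = ∫⁻ _ , (0:ENNReal) ∂μ := by simp
    rw [h0]
    refine tendsto_lintegral_of_dominated_convergence'
      (fun _ => ENNReal.ofReal M ^ p.toReal) (fun n => ?_) (fun n => ?_) ?_ ?_
    · exact ((hF n).enorm.pow_const _)
    · filter_upwards [hbound n] with t ht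
      refine ENNReal.rpow_le_rpow ?_ hq.le
      rw [← ENNReal.ofReal_coe_nnreal, coe_nnnorm]
      exact ENNReal.ofReal_le_ofReal ht
    · rw [lintegral_const]
      exact ENNReal.mul_ne_top (ENNReal.rpow_ne_top_of_nonneg hq.le ENNReal.ofReal_ne_top)
        (measure_ne_top μ _)
    · filter_upwards [hae] with t ht
      have h1 : Tendsto (fun n => (‖F n t‖₊ : ENNReal)) atTop (nhds 0) := by
        have := (ENNReal.continuous_coe.comp continuous_nnnorm).tendsto (0 : X)
        simpa [Function.comp_def] using this.comp ht
      have h2 := (ENNReal.continuous_rpow_const (y := p.toReal)).tendsto 0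
      rw [ENNReal.zero_rpow_of_pos hq] at h2
      simpa [Function.comp_def] using h2.comp h1
  have heq : ∀ n, eLpNorm (F n) p μ
      = (∫⁻ t, (‖F n t‖₊ : ENNReal) ^ p.toReal ∂μ) ^ (1 / p.toReal) := fun n =>
    eLpNorm_eq_lintegral_rpow_enorm_toReal hp0 hp
  simp_rw [heq]
  have h2 := (ENNReal.continuous_rpow_const (y := 1 / p.toReal)).tendsto 0
  rw [ENNReal.zero_rpow_of_pos (by positivity)] at h2
  exact h2.comp hL


lemma keyAE (hT : 0 < T) (hmeas : ∀ x : D, StronglyMeasurable fun t => A t x)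
    (hbd : ∀ t ∈ Set.Icc (0 : ℝ) T, ∀ x : D, ‖A t x‖ ≤ C * ‖x‖) (x : D) :
    ∀ᵐ t ∂(volume.restrict (Set.Ioc 0 T)),
      Tendsto (fun n => opStep A T n t x) atTop (nhds (A t x)) := by
  set f : ℝ → X := Set.indicator (Set.Icc 0 T) (fun r => A r x) with hf
  have hfint : Integrable f := by
    rw [hf, integrable_indicator_iff measurableSet_Icc]
    refine Integrable.mono' (g := fun _ => C * ‖x‖)
      (integrableOn_const measure_Icc_lt_top.ne)
      ((hmeas x).aestronglyMeasurable.restrict) ?_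
    filter_upwards [ae_restrict_mem measurableSet_Icc] with r hr
    exact hbd r hr x
  have H := IsUnifLocDoublingMeasure.ae_tendsto_average_norm_sub
    (μ := (volume : Measure ℝ)) hfint.locallyIntegrable 1
  filter_upwards [ae_restrict_of_ae H, ae_restrict_mem measurableSet_Ioc] with t ht htm
  have ht0 : 0 < t := htm.1
  have htT : t ≤ T := htm.2
  set h : ℕ → ℝ := fun n => T / (n + 1) with hh
  set δ : ℕ → ℝ := fun n => h n / 2 with hδ
  set w : ℕ → ℝ := fun n => (uidx T n t : ℝ) * h n + δ n with hw
  have hhpos : ∀ n, 0 < h n := fun n => by simp only [hh]; positivity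
  have δlim : Tendsto δ atTop (nhdsWithin 0 (Set.Ioi 0)) := by
    refine tendsto_nhdsWithin_of_tendsto_nhds_of_eventually_within _ ?_ ?_
    · have h2 : Tendsto (fun n : ℕ => (T / 2) * (1 / ((n:ℝ) + 1))) atTop
          (nhds ((T / 2) * 0)) := tendsto_one_div_add_atTop_nhds_zero_nat.const_mul _
      rw [mul_zero] at h2
      convert h2 using 2 with n
      simp only [hδ, hh]; ring
    · filter_upwards with n
      exact half_pos (hhpos n)
  have xmem : ∀ᶠ n in atTop, t ∈ Metric.closedBall (w n) (1 * δ n) := by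
    filter_upwards with n
    obtain ⟨h1, h2⟩ := uidx_spec hT ht0 htT n
    rw [Metric.mem_closedBall, Real.dist_eq, one_mul, abs_le]
    constructor <;> [skip; skip] <;>
      · simp only [hw, hδ] at *
        nlinarith [hhpos n]
  have Havg := ht w δ δlim xmem
  have hbnd : ∀ n, ‖opStep A T n t x - A t x‖
      ≤ ⨍ y in Metric.closedBall (w n) (δ n), ‖f y - f t‖ := by
    intro n
    set k := uidx T n t with hk
    have hkn : k ≤ n := uidx_le T n t
    set a : ℝ := (k : ℝ) * (h n) with ha
    set b : ℝ := ((k : ℝ) + 1) * (h n) with hb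
    obtain ⟨hta, htb⟩ := uidx_spec hT ht0 htT n
    have hab : a ≤ b := endpoint_mono T hT n k
    have ha0 : 0 ≤ a := endpoint_nonneg T hT n k
    have hbT : b ≤ T := endpoint_le T hT hkn
    have hball : Metric.closedBall (w n) (δ n) = Set.Icc a b := by
      rw [Real.closedBall_eq_Icc]
      congr 1 <;> · simp only [hw, hδ, ha, hb]; ring
    have hba : b - a = h n := by simp only [ha, hb]; ring
    have hcalc : opStep A T n t x - A t x = ((n + 1 : ℝ) / T) • ∫ r in a..b,
        (A r x - A t x) := by
      rw [intervalIntegral.integral_sub (intIntK hT hmeas hbd x hkn)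
        intervalIntegrable_const, smul_sub]
      congr 1
      rw [intervalIntegral.integral_const, smul_smul]
      have h1 : ((n:ℝ) + 1) / T * (b - a) = 1 := by
        rw [hba]; simp only [hh]; field_simp
      rw [h1, one_smul]
    have hnorm : ‖opStep A T n t x - A t x‖
        ≤ ((n:ℝ) + 1) / T * ∫ r in a..b, ‖A r x - A t x‖ := by
      rw [hcalc, norm_smul, Real.norm_eq_abs, abs_of_nonneg (by positivity)]
      exact mul_le_mul_of_nonneg_left
        (intervalIntegral.norm_integral_le_integral_norm hab) (by positivity)
    have hIcc : Set.Icc a b ⊆ Set.Icc 0 T := Set.Icc_subset_Icc ha0 hbT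
    have hset : ∫ r in a..b, ‖A r x - A t x‖ = ∫ y in Set.Icc a b, ‖f y - f t‖ := by
      rw [intervalIntegral.integral_of_le hab, ← integral_Icc_eq_integral_Ioc]
      apply setIntegral_congr_fun measurableSet_Icc
      intro y hy
      simp only [hf]
      rw [Set.indicator_of_mem (hIcc hy), Set.indicator_of_mem (Set.mem_Icc.2 ⟨ht0.le, htT⟩)]
    have havg : (⨍ y in Metric.closedBall (w n) (δ n), ‖f y - f t‖)
        = ((n:ℝ) + 1) / T * ∫ y in Set.Icc a b, ‖f y - f t‖ := by
      rw [hball, setAverage_eq, measureReal_def, Real.volume_Icc, hba]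
      rw [ENNReal.toReal_ofReal (hhpos n).le, smul_eq_mul]
      congr 1
      simp only [hh]
      field_simp
    rw [havg, ← hset]
    exact hnorm
  rw [tendsto_iff_norm_sub_tendsto_zero]
  exact squeeze_zero (fun n => norm_nonneg _) hbnd Havg

lemma keyLp (hT : 0 < T) (hmeas : ∀ x : D, StronglyMeasurable fun t => A t x)
    (hbd : ∀ t ∈ Set.Icc (0 : ℝ) T, ∀ x : D, ‖A t x‖ ≤ C * ‖x‖)
    {p : ENNReal} (hp0 : p ≠ 0) (hp : p ≠ ⊤) (x : D) :
    Tendsto (fun n => eLpNorm (fun t => opStep A T n t x - A t x) p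
      (volume.restrict (Set.Ioc 0 T))) atTop (nhds 0) := by
  haveI : IsFiniteMeasure (volume.restrict (Set.Ioc (0:ℝ) T)) :=
    ⟨by rw [Measure.restrict_apply_univ]; exact measure_Ioc_lt_top⟩
  refine tendsto_eLpNorm_zero (M := C * ‖x‖ + C * ‖x‖) (fun n => ?_) (fun n => ?_) ?_ hp0 hp
  · exact ((stronglyMeasurable_opStep hT n x).sub (hmeas x)).aestronglyMeasurable
  · filter_upwards [ae_restrict_mem measurableSet_Ioc] with t htm
    calc ‖opStep A T n t x - A t x‖ ≤ ‖opStep A T n t x‖ + ‖A t x‖ := norm_sub_le _ _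
      _ ≤ C * ‖x‖ + C * ‖x‖ := add_le_add (opStep_norm_le hT hbd n t x)
          (hbd t ⟨htm.1.le, htm.2⟩ x)
  · filter_upwards [keyAE hT hmeas hbd x] with t ht
    simpa using ht.sub_const (A t x)

lemma keySimple (hT : 0 < T) (hmeas : ∀ x : D, StronglyMeasurable fun t => A t x)
    (hbd : ∀ t ∈ Set.Icc (0 : ℝ) T, ∀ x : D, ‖A t x‖ ≤ C * ‖x‖)
    {p : ENNReal} (hp1 : 1 ≤ p) (hp : p ≠ ⊤) (s : SimpleFunc ℝ D) :
    Tendsto (fun n => eLpNorm (fun t => opStep A T n t (s t) - A t (s t)) p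
      (volume.restrict (Set.Ioc 0 T))) atTop (nhds 0) := by
  have hp0 : p ≠ 0 := (zero_lt_one.trans_le hp1).ne'
  induction s using SimpleFunc.induction with
  | @const c E hE =>
    have heq : ∀ n : ℕ, (fun t => opStep A T n t
        ((SimpleFunc.piecewise E hE (SimpleFunc.const ℝ c) (SimpleFunc.const ℝ 0)) t)
        - A t ((SimpleFunc.piecewise E hE (SimpleFunc.const ℝ c) (SimpleFunc.const ℝ 0)) t))
        = Set.indicator E (fun t => opStep A T n t c - A t c) := by
      intro n; funext t
      by_cases h : t ∈ E
      · simp [SimpleFunc.piecewise_apply, h]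
      · simp [SimpleFunc.piecewise_apply, h, opStep_zero]
    simp_rw [heq]
    refine tendsto_of_tendsto_of_tendsto_of_le_of_le tendsto_const_nhds
      (keyLp hT hmeas hbd hp0 hp c) (fun n => zero_le)
      (fun n => eLpNorm_indicator_le _)
  | @add f g hdisj hf hg =>
    have heq : ∀ (n : ℕ) (t : ℝ), opStep A T n t ((f + g) t) - A t ((f + g) t)
        = (opStep A T n t (f t) - A t (f t)) + (opStep A T n t (g t) - A t (g t)) := by
      intro n t
      have h1 : (f + g) t = f t + g t := rfl
      rw [h1, opStep_add hT hmeas hbd, map_add]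
      abel
    have hmF : ∀ (n : ℕ) (s' : SimpleFunc ℝ D), AEStronglyMeasurable
        (fun t => opStep A T n t (s' t) - A t (s' t)) (volume.restrict (Set.Ioc (0:ℝ) T)) :=
      fun n s' => ((stronglyMeasurable_apply_simple
        (fun x => stronglyMeasurable_opStep hT n x) s').sub
        (stronglyMeasurable_apply_simple (fun x => hmeas x) s')).aestronglyMeasurable
    refine tendsto_of_tendsto_of_tendsto_of_le_of_le tendsto_const_nhds
      (by simpa using hf.add hg) (fun n => zero_le) (fun n => ?_)
    have h2 : (fun t => opStep A T n t ((f + g) t) - A t ((f + g) t))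
        = fun t => (opStep A T n t (f t) - A t (f t))
            + (opStep A T n t (g t) - A t (g t)) := by
      funext t; exact heq n t
    rw [h2]
    exact eLpNorm_add_le (hmF n f) (hmF n g) hp1


end OpStepAux

open OpStepAux

/-- Let `D ↪ X` be a continuous dense embedding of Banach spaces and
`A : [0,T] → L(D,X)` bounded and strongly measurable.  If `u_Λ → u` in
`L^p(0,T;D)`, then `A_Λ^S(·)u_Λ(·) → A(·)u(·)` in `L^p(0,T;X)` as the mesh of the
uniform subdivision `Λ` tends to `0`. -/
theorem opStep_apply_tendsto_Lp
    {D : Type*} [NormedAddCommGroup D] [NormedSpace ℝ D] [CompleteSpace D]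
    (ι : D →L[ℝ] X) (hinj : Function.Injective ι) (hdense : DenseRange ι)
    (T : ℝ) (hT : 0 < T) (A : ℝ → D →L[ℝ] X)
    (hmeas : ∀ x : D, StronglyMeasurable fun t => A t x)
    (C : ℝ) (hbd : ∀ t ∈ Set.Icc (0 : ℝ) T, ∀ x : D, ‖A t x‖ ≤ C * ‖x‖)
    (p : ENNReal) (hp1 : 1 ≤ p) (hp : p ≠ ⊤)
    (u : ℝ → D) (uΛ : ℕ → ℝ → D)
    (hu : MemLp u p (volume.restrict (Set.Ioc 0 T)))
    (huΛ : ∀ n, MemLp (uΛ n) p (volume.restrict (Set.Ioc 0 T)))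
    (hconv : Tendsto (fun n => eLpNorm (fun t => uΛ n t - u t) p
        (volume.restrict (Set.Ioc 0 T))) atTop (nhds 0)) :
    Tendsto (fun n => eLpNorm (fun t => opStep A T n t (uΛ n t) - A t (u t)) p
        (volume.restrict (Set.Ioc 0 T))) atTop (nhds 0) := by
  classical
  set μT := volume.restrict (Set.Ioc (0:ℝ) T) with hμT
  set C' : ℝ := max C 0 with hC'
  have hC'0 : 0 ≤ C' := le_max_right _ _
  have hbd' : ∀ t ∈ Set.Icc (0:ℝ) T, ∀ x : D, ‖A t x‖ ≤ C' * ‖x‖ := fun t ht x =>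
    (hbd t ht x).trans (mul_le_mul_of_nonneg_right (le_max_left _ _) (norm_nonneg _))
  have hp0 : p ≠ 0 := (zero_lt_one.trans_le hp1).ne'
  have hsub : ∀ t ∈ Set.Ioc (0:ℝ) T, t ∈ Set.Icc (0:ℝ) T := fun t ht => ⟨ht.1.le, ht.2⟩
  set cE : ENNReal := (C'.toNNReal : ENNReal) with hcEdef
  have hcE : cE ≠ ⊤ := ENNReal.coe_ne_top
  have hCcoe : ((C'.toNNReal : ℝ)) = C' := Real.coe_toNNReal _ hC'0
  -- measurability helpers
  have hmOp : ∀ (n : ℕ) (v : ℝ → D), AEStronglyMeasurable v μT →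
      AEStronglyMeasurable (fun t => opStep A T n t (v t)) μT := fun n v hv =>
    aestronglyMeasurable_apply (fun x => stronglyMeasurable_opStep hT n x)
      (fun t => continuous_opStep hT hmeas hbd' n t) hv
  have hmA : ∀ (v : ℝ → D), AEStronglyMeasurable v μT →
      AEStronglyMeasurable (fun t => A t (v t)) μT := fun v hv =>
    aestronglyMeasurable_apply (fun x => hmeas x) (fun t => (A t).continuous) hv
  rw [ENNReal.tendsto_atTop_zero]
  intro ε hε
  set δ : ENNReal := ε / (4 * (cE + 1)) with hδdef
  have hδ0 : δ ≠ 0 := by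
    refine (ENNReal.div_pos hε.ne' ?_).ne'
    exact ENNReal.mul_ne_top (by norm_num) (ENNReal.add_ne_top.2 ⟨hcE, ENNReal.one_ne_top⟩)
  have hkey : cE * δ ≤ ε / 4 := by
    calc cE * δ ≤ (cE + 1) * δ := mul_le_mul_left le_self_add δ
      _ = ((cE + 1) * ε) / ((cE + 1) * 4) := by
          rw [hδdef, mul_comm (4:ENNReal) (cE+1), div_eq_mul_inv, div_eq_mul_inv, mul_assoc]
      _ = ε / 4 := ENNReal.mul_div_mul_left _ _ (by simp) (ENNReal.add_ne_top.2 ⟨hcE, ENNReal.one_ne_top⟩)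
  obtain ⟨s, hs_lt, hs_mem⟩ := hu.exists_simpleFunc_eLpNorm_sub_lt hp hδ0
  have hus : eLpNorm (fun t => u t - s t) p μT ≤ δ := hs_lt.le
  have hsAE : AEStronglyMeasurable (fun t => s t) μT :=
    s.stronglyMeasurable.aestronglyMeasurable
  -- pick N
  rw [ENNReal.tendsto_atTop_zero] at hconv
  obtain ⟨N1, hN1⟩ := hconv δ (pos_iff_ne_zero.2 hδ0)
  have hE2 := keySimple hT hmeas hbd' hp1 hp s
  rw [ENNReal.tendsto_atTop_zero] at hE2
  obtain ⟨N2, hN2⟩ := hE2 (ε / 4) (ENNReal.div_pos hε.ne' (by norm_num))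
  refine ⟨max N1 N2, fun n hn => ?_⟩
  have hn1 : N1 ≤ n := le_trans (le_max_left _ _) hn
  have hn2 : N2 ≤ n := le_trans (le_max_right _ _) hn
  -- measurability of pieces
  have m1 : AEStronglyMeasurable (fun t => opStep A T n t (uΛ n t - s t)) μT :=
    hmOp n _ ((huΛ n).1.sub hsAE)
  have m2 : AEStronglyMeasurable (fun t => opStep A T n t (s t) - A t (s t)) μT :=
    (hmOp n _ hsAE).sub (hmA _ hsAE)
  have m3 : AEStronglyMeasurable (fun t => A t (s t - u t)) μT :=
    hmA _ (hsAE.sub hu.1)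
  -- decomposition
  have hdec : (fun t => opStep A T n t (uΛ n t) - A t (u t))
      = fun t => (opStep A T n t (uΛ n t - s t) + (opStep A T n t (s t) - A t (s t)))
          + A t (s t - u t) := by
    funext t
    rw [opStep_sub hT hmeas hbd', map_sub]
    abel
  -- bounds
  have hB1 : eLpNorm (fun t => opStep A T n t (uΛ n t - s t)) p μT
      ≤ cE * eLpNorm (fun t => uΛ n t - s t) p μT := by
    have := eLpNorm_le_nnreal_smul_eLpNorm_of_ae_le_mul (μ := μT) (c := C'.toNNReal)
      (f := fun t => opStep A T n t (uΛ n t - s t)) (g := fun t => uΛ n t - s t)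
      (Filter.Eventually.of_forall fun t => by
        show ‖opStep A T n t (uΛ n t - s t)‖₊ ≤ C'.toNNReal * ‖uΛ n t - s t‖₊
        rw [← NNReal.coe_le_coe, NNReal.coe_mul, coe_nnnorm, coe_nnnorm, hCcoe]
        exact opStep_norm_le hT hbd' n t _) p
    simpa [ENNReal.smul_def, smul_eq_mul] using this
  have hB3 : eLpNorm (fun t => A t (s t - u t)) p μT
      ≤ cE * eLpNorm (fun t => s t - u t) p μT := by
    have := eLpNorm_le_nnreal_smul_eLpNorm_of_ae_le_mul (μ := μT) (c := C'.toNNReal)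
      (f := fun t => A t (s t - u t)) (g := fun t => s t - u t)
      (by
        filter_upwards [ae_restrict_mem measurableSet_Ioc] with t htm
        show ‖A t (s t - u t)‖₊ ≤ C'.toNNReal * ‖s t - u t‖₊
        rw [← NNReal.coe_le_coe, NNReal.coe_mul, coe_nnnorm, coe_nnnorm, hCcoe]
        exact hbd' t (hsub t htm) _) p
    simpa [ENNReal.smul_def, smul_eq_mul] using this
  have htri : eLpNorm (fun t => uΛ n t - s t) p μT
      ≤ eLpNorm (fun t => uΛ n t - u t) p μT + eLpNorm (fun t => u t - s t) p μT := by
    have heq2 : (fun t => uΛ n t - s t)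
        = fun t => (uΛ n t - u t) + (u t - s t) := by funext t; abel
    rw [heq2]
    exact eLpNorm_add_le ((huΛ n).1.sub hu.1) (hu.1.sub hsAE) hp1
  have hsu : eLpNorm (fun t => s t - u t) p μT ≤ δ := by
    have h := eLpNorm_sub_comm (fun t : ℝ => s t) u p μT
    calc eLpNorm (fun t => s t - u t) p μT = eLpNorm (fun t => u t - s t) p μT := h
      _ ≤ δ := hus
  have e4 : ε / 4 + ε / 4 + ε / 4 + ε / 4 ≤ ε := by
    rw [show ε / 4 + ε / 4 + ε / 4 + ε / 4 = 4 * (ε / 4) by ring,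
      ENNReal.mul_div_cancel' (by norm_num) (by norm_num)]
  calc eLpNorm (fun t => opStep A T n t (uΛ n t) - A t (u t)) p μT
      = eLpNorm (fun t => (opStep A T n t (uΛ n t - s t)
          + (opStep A T n t (s t) - A t (s t))) + A t (s t - u t)) p μT := by rw [hdec]
    _ ≤ eLpNorm (fun t => opStep A T n t (uΛ n t - s t)
          + (opStep A T n t (s t) - A t (s t))) p μT
        + eLpNorm (fun t => A t (s t - u t)) p μT := eLpNorm_add_le (m1.add m2) m3 hp1
    _ ≤ (eLpNorm (fun t => opStep A T n t (uΛ n t - s t)) p μT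
          + eLpNorm (fun t => opStep A T n t (s t) - A t (s t)) p μT)
        + eLpNorm (fun t => A t (s t - u t)) p μT :=
        add_le_add_left (eLpNorm_add_le m1 m2 hp1) _
    _ ≤ (cE * (eLpNorm (fun t => uΛ n t - u t) p μT
            + eLpNorm (fun t => u t - s t) p μT) + ε / 4)
        + cE * eLpNorm (fun t => s t - u t) p μT :=
        add_le_add (add_le_add (hB1.trans (mul_le_mul_right htri cE)) (hN2 n hn2)) hB3
    _ ≤ (cE * (δ + δ) + ε / 4) + cE * δ :=
        add_le_add (add_le_add (mul_le_mul_right (add_le_add (hN1 n hn1) hus) cE) le_rfl)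
          (mul_le_mul_right hsu cE)
    _ = ((cE * δ + cE * δ) + ε / 4) + cE * δ := by rw [mul_add]
    _ ≤ ((ε / 4 + ε / 4) + ε / 4) + ε / 4 :=
        add_le_add (add_le_add (add_le_add hkey hkey) le_rfl) hkey
    _ ≤ ε := by
        calc ((ε / 4 + ε / 4) + ε / 4) + ε / 4 = ε / 4 + ε / 4 + ε / 4 + ε / 4 := by ring
          _ ≤ ε := e4

end
end

section
/- Under the same hypotheses, if u_Λ → u in L^p(0,T; D) (1 ≤ p < ∞), then A_Λ^L(·)u_Λ(·) → A(·)u(·) in L^p(0,T; X) as |Λ| → 0, where A_Λ^L is the piecewise-linear interpolation of the interval averages of A over a uniform subdivision. -/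
open MeasureTheory Filter intervalIntegral
open Topology
set_option linter.unusedSectionVars false
set_option linter.unusedVariables false
set_option linter.unusedTactic false
set_option linter.unreachableTactic false

noncomputable section

variable {X : Type*} [NormedAddCommGroup X] [NormedSpace ℝ X] [CompleteSpace X]

/-- Piecewise linear interpolation of the interval averages of `f` over the
uniform subdivision of `[0,T]` into `n+1` subintervals. -/
def linApprox (f : ℝ → X) (T : ℝ) (n : ℕ) (t : ℝ) : X :=
  (((uidx T n t + 1 : ℝ) * (T / (n + 1)) - t) / (T / (n + 1))) • uavg f T n (uidx T n t) +
    ((t - (uidx T n t : ℝ) * (T / (n + 1))) / (T / (n + 1))) •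
      uavg f T n (min (uidx T n t + 1) n)

/-- The piecewise linear approximation `A_Λ^L(t)x` of a strongly measurable
operator family `A : [0,T] → L(D,X)`, applied to `x ∈ D`. -/
def opLin {D : Type*} [NormedAddCommGroup D] [NormedSpace ℝ D]
    (A : ℝ → D →L[ℝ] X) (T : ℝ) (n : ℕ) (t : ℝ) (x : D) : X :=
  linApprox (fun r => A r x) T n t

section Lemmas

variable {T : ℝ} {n : ℕ}

lemma hpos (hT : 0 < T) (n : ℕ) : (0:ℝ) < T / (n+1) := div_pos hT (by positivity)

lemma uidx_le (T : ℝ) (n : ℕ) (t : ℝ) : uidx T n t ≤ n := min_le_right _ _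

lemma uidx_spec (hT : 0 < T) {t : ℝ} (ht : t ∈ Set.Ioc 0 T) :
    (uidx T n t : ℝ) * (T / (n + 1)) ≤ t ∧ t ≤ ((uidx T n t : ℝ) + 1) * (T / (n + 1)) := by
  have hh : (0:ℝ) < T / (n+1) := hpos hT n
  have hn1 : (0:ℝ) < (n:ℝ) + 1 := by positivity
  have hT0 : T ≠ 0 := hT.ne'
  have hn0 : ((n:ℝ)+1) ≠ 0 := by positivity
  have harg : 0 ≤ t * (n + 1) / T := div_nonneg (by nlinarith [ht.1.le]) hT.le
  by_cases hc : ⌊t * (n + 1) / T⌋₊ ≤ n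
  · have hidx : uidx T n t = ⌊t * (n + 1) / T⌋₊ := min_eq_left hc
    constructor
    · rw [hidx]
      have h1 : (⌊t * (n + 1) / T⌋₊ : ℝ) ≤ t * (n + 1) / T := Nat.floor_le harg
      calc (⌊t * (n + 1) / T⌋₊ : ℝ) * (T / (n+1)) ≤ (t * (n + 1) / T) * (T / (n+1)) := by
              apply mul_le_mul_of_nonneg_right h1 hh.le
        _ = t := by field_simp
    · rw [hidx]
      have h2 : t * (n + 1) / T < ⌊t * (n + 1) / T⌋₊ + 1 := Nat.lt_floor_add_one _
      have := mul_lt_mul_of_pos_right h2 hh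
      calc t = (t * (n + 1) / T) * (T / (n+1)) := by field_simp
        _ ≤ ((⌊t * (n + 1) / T⌋₊:ℝ) + 1) * (T / (n+1)) := by
              apply mul_le_mul_of_nonneg_right h2.le hh.le
  · push_neg at hc
    have hidx : uidx T n t = n := min_eq_right (le_of_lt hc)
    have hge : ((n:ℝ) + 1) ≤ t * (n + 1) / T := by
      have : (n + 1 : ℕ) ≤ ⌊t * (n + 1) / T⌋₊ := hc
      exact_mod_cast (Nat.le_floor_iff harg).1 this
    have hTt : T ≤ t := by
      have := mul_le_mul_of_nonneg_right hge hh.le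
      calc T = ((n:ℝ)+1) * (T/(n+1)) := by field_simp
        _ ≤ (t * (n + 1) / T) * (T / (n+1)) := this
        _ = t := by field_simp
    have hteq : t = T := le_antisymm ht.2 hTt
    constructor
    · rw [hidx, hteq]
      calc (n:ℝ) * (T/(n+1)) ≤ ((n:ℝ)+1) * (T/(n+1)) := by nlinarith
        _ = T := by field_simp
    · rw [hidx, hteq]
      have : ((n:ℝ)+1) * (T/(n+1)) = T := by field_simp
      rw [this]

lemma coeff_spec (hT : 0 < T) {t : ℝ} (ht : t ∈ Set.Ioc 0 T) :
    0 ≤ (((uidx T n t : ℝ) + 1) * (T / (n + 1)) - t) / (T / (n + 1)) ∧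
    0 ≤ (t - (uidx T n t : ℝ) * (T / (n + 1))) / (T / (n + 1)) ∧
    (((uidx T n t : ℝ) + 1) * (T / (n + 1)) - t) / (T / (n + 1)) +
      (t - (uidx T n t : ℝ) * (T / (n + 1))) / (T / (n + 1)) = 1 := by
  have hh := hpos hT n
  obtain ⟨h1, h2⟩ := uidx_spec hT (n := n) ht
  refine ⟨div_nonneg (by linarith) hh.le, div_nonneg (by linarith) hh.le, ?_⟩
  field_simp
  ring

lemma norm_uavg_le (hT : 0 < T) {f : ℝ → X} {M : ℝ}
    (hf : ∀ t ∈ Set.Icc 0 T, ‖f t‖ ≤ M) {k : ℕ} (hk : k ≤ n) :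
    ‖uavg f T n k‖ ≤ M := by
  have hh := hpos hT n
  have hsub : Set.uIoc ((k : ℝ) * (T / (n + 1))) (((k : ℝ) + 1) * (T / (n + 1))) ⊆
      Set.Icc 0 T := by
    rw [Set.uIoc_of_le (by nlinarith)]
    intro x hx
    have hkn : ((k:ℝ)+1) ≤ (n:ℝ)+1 := by exact_mod_cast Nat.succ_le_succ hk
    have hb : ((k:ℝ)+1) * (T/(n+1)) ≤ T := by
      have : ((n:ℝ)+1) * (T/(n+1)) = T := by
        field_simp
      nlinarith
    have ha : (0:ℝ) ≤ (k:ℝ) * (T/(n+1)) := by positivity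
    exact ⟨le_of_lt (lt_of_le_of_lt ha hx.1), hx.2.trans hb⟩
  have h1 : ‖∫ r in ((k : ℝ) * (T / (n + 1)))..(((k : ℝ) + 1) * (T / (n + 1))), f r‖ ≤
      M * |(((k : ℝ) + 1) * (T / (n + 1))) - ((k : ℝ) * (T / (n + 1)))| :=
    intervalIntegral.norm_integral_le_of_norm_le_const (fun x hx => hf x (hsub hx))
  have habs : |(((k : ℝ) + 1) * (T / (n + 1))) - ((k : ℝ) * (T / (n + 1)))| = T/(n+1) := by
    rw [abs_of_nonneg (by nlinarith)]; ring
  rw [habs] at h1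
  unfold uavg
  rw [norm_smul, Real.norm_eq_abs, abs_of_nonneg (by positivity)]
  calc ((n:ℝ)+1)/T * ‖∫ r in ((k : ℝ) * (T / (n + 1)))..(((k : ℝ) + 1) * (T / (n + 1))), f r‖
      ≤ ((n:ℝ)+1)/T * (M * (T/(n+1))) := by
        apply mul_le_mul_of_nonneg_left h1 (by positivity)
    _ = M := by field_simp

lemma norm_linApprox_le (hT : 0 < T) {f : ℝ → X} {M : ℝ}
    (hf : ∀ t ∈ Set.Icc 0 T, ‖f t‖ ≤ M) {t : ℝ} (ht : t ∈ Set.Ioc 0 T) :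
    ‖linApprox f T n t‖ ≤ M := by
  obtain ⟨hc1, hc2, hc12⟩ := coeff_spec hT (n := n) ht
  have hv : ‖uavg f T n (uidx T n t)‖ ≤ M := norm_uavg_le hT hf (uidx_le T n t)
  have hw : ‖uavg f T n (min (uidx T n t + 1) n)‖ ≤ M := norm_uavg_le hT hf (min_le_right _ _)
  unfold linApprox
  calc ‖_ • uavg f T n (uidx T n t) + _ • uavg f T n (min (uidx T n t + 1) n)‖
      ≤ ‖_ • uavg f T n (uidx T n t)‖ + ‖_ • uavg f T n (min (uidx T n t + 1) n)‖ :=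
        norm_add_le _ _
    _ ≤ (((uidx T n t : ℝ) + 1) * (T / (n + 1)) - t) / (T / (n + 1)) * M +
        (t - (uidx T n t : ℝ) * (T / (n + 1))) / (T / (n + 1)) * M := by
        rw [norm_smul, norm_smul, Real.norm_eq_abs, Real.norm_eq_abs,
          abs_of_nonneg hc1, abs_of_nonneg hc2]
        gcongr <;> first | exact hv | exact hw
    _ = M := by rw [← add_mul, hc12, one_mul]

lemma uavg_congr {f g : ℝ → X} (hT : 0 < T) (hfg : Set.EqOn f g (Set.Icc 0 T))
    {k : ℕ} (hk : k ≤ n) : uavg f T n k = uavg g T n k := by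
  have hh := hpos hT n
  unfold uavg
  congr 1
  apply intervalIntegral.integral_congr
  intro x hx
  apply hfg
  rw [Set.uIcc_of_le (by nlinarith)] at hx
  have hkn : ((k:ℝ)+1) ≤ (n:ℝ)+1 := by exact_mod_cast Nat.succ_le_succ hk
  have hTeq : ((n:ℝ)+1) * (T/(n+1)) = T := by field_simp
  exact ⟨le_trans (by positivity) hx.1, hx.2.trans (by nlinarith)⟩

lemma linApprox_congr {f g : ℝ → X} (hT : 0 < T) (hfg : Set.EqOn f g (Set.Icc 0 T))
    (t : ℝ) : linApprox f T n t = linApprox g T n t := by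
  unfold linApprox
  rw [uavg_congr hT hfg (uidx_le T n t), uavg_congr hT hfg (min_le_right _ _)]

lemma Ioc_subset_ball (hT : 0 < T) {t : ℝ} (ht : t ∈ Set.Ioc 0 T) {j : ℕ}
    (hj1 : uidx T n t ≤ j) (hj2 : j ≤ uidx T n t + 1) :
    Set.Ioc ((j : ℝ) * (T / (n + 1))) (((j : ℝ) + 1) * (T / (n + 1))) ⊆
      Metric.closedBall t (2 * (T / (n + 1))) := by
  have hh := hpos hT n
  obtain ⟨h1, h2⟩ := uidx_spec hT (n := n) ht
  have hj1' : (uidx T n t : ℝ) ≤ (j : ℝ) := by exact_mod_cast hj1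
  have hj2' : (j : ℝ) ≤ (uidx T n t : ℝ) + 1 := by exact_mod_cast hj2
  intro y hy
  rw [Metric.mem_closedBall, Real.dist_eq, abs_le]
  constructor <;> nlinarith [hy.1, hy.2]

lemma norm_uavg_sub_le (hT : 0 < T) {f : ℝ → X} (hf : MeasureTheory.LocallyIntegrable f volume)
    {t : ℝ} (ht : t ∈ Set.Ioc 0 T) {j : ℕ}
    (hj1 : uidx T n t ≤ j) (hj2 : j ≤ uidx T n t + 1) (hjn : j ≤ n) :
    ‖uavg f T n j - f t‖ ≤ 4 * ⨍ y in Metric.closedBall t (2 * (T / (n + 1))), ‖f y - f t‖ := by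
  have hh := hpos hT n
  set h : ℝ := T / (n + 1) with hhdef
  set a : ℝ := (j : ℝ) * h with hadef
  set b : ℝ := ((j : ℝ) + 1) * h with hbdef
  have hab : a ≤ b := by nlinarith
  have hba : b - a = h := by rw [hadef, hbdef]; ring
  set B : Set ℝ := Metric.closedBall t (2 * h) with hBdef
  have hIB : Set.Ioc a b ⊆ B := Ioc_subset_ball hT ht hj1 hj2
  have hint : IntervalIntegrable f volume a b :=
    (hf.integrableOn_isCompact isCompact_uIcc).intervalIntegrable
  have hintB : MeasureTheory.IntegrableOn (fun y => ‖f y - f t‖) B volume := by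
    refine MeasureTheory.Integrable.norm ?_
    refine MeasureTheory.Integrable.sub (hf.integrableOn_isCompact (isCompact_closedBall t _)) ?_
    refine MeasureTheory.integrableOn_const (hs := ?_)
    rw [hBdef, Real.volume_closedBall]
    exact ENNReal.ofReal_ne_top
  have hc : ((n : ℝ) + 1) / T * h = 1 := by rw [hhdef]; field_simp
  have heq : uavg f T n j - f t = (((n : ℝ) + 1) / T) • ∫ y in a..b, (f y - f t) := by
    rw [intervalIntegral.integral_sub hint (intervalIntegrable_const),
      intervalIntegral.integral_const, smul_sub, hba, smul_smul, hc, one_smul]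
    rfl
  have hvol : (volume B).toReal = 2 * (2 * h) := by
    rw [hBdef, Real.volume_closedBall, ENNReal.toReal_ofReal (by positivity)]
  have havg : ∫ y in B, ‖f y - f t‖ = (2 * (2 * h)) * ⨍ y in B, ‖f y - f t‖ := by
    rw [MeasureTheory.setAverage_eq, measureReal_def, hvol, smul_eq_mul, ← mul_assoc,
      mul_inv_cancel₀ (by positivity), one_mul]
  calc ‖uavg f T n j - f t‖ = (((n : ℝ) + 1) / T) * ‖∫ y in a..b, (f y - f t)‖ := by
        rw [heq, norm_smul, Real.norm_eq_abs, abs_of_nonneg (by positivity)]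
    _ ≤ (((n : ℝ) + 1) / T) * ∫ y in a..b, ‖f y - f t‖ := by
        apply mul_le_mul_of_nonneg_left (intervalIntegral.norm_integral_le_integral_norm hab)
          (by positivity)
    _ ≤ (((n : ℝ) + 1) / T) * ∫ y in B, ‖f y - f t‖ := by
        apply mul_le_mul_of_nonneg_left _ (by positivity)
        rw [intervalIntegral.integral_of_le hab]
        exact MeasureTheory.setIntegral_mono_set hintB
          (Filter.Eventually.of_forall fun y => norm_nonneg _)
          (Filter.Eventually.of_forall hIB)
    _ = 4 * ⨍ y in B, ‖f y - f t‖ := by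
        rw [havg, ← mul_assoc]
        have : ((n : ℝ) + 1) / T * (2 * (2 * h)) = 4 := by
          have := hc; nlinarith
        rw [this]

lemma ae_tendsto_linApprox (hT : 0 < T) {f : ℝ → X}
    (hf : MeasureTheory.LocallyIntegrable f volume) :
    ∀ᵐ t ∂(volume : MeasureTheory.Measure ℝ), t ∈ Set.Ioc 0 T →
      Tendsto (fun n => linApprox f T n t) atTop (𝓝 (f t)) := by
  filter_upwards [IsUnifLocDoublingMeasure.ae_tendsto_average_norm_sub (μ := volume) hf 1]
    with t htt ht
  have hδ0 : Tendsto (fun n : ℕ => 2 * (T / (n + 1))) atTop (𝓝 0) := by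
    have h1 : Tendsto (fun n : ℕ => T / (n + 1)) atTop (𝓝 0) := by
      have := (tendsto_const_div_atTop_nhds_zero_nat T).comp (tendsto_add_atTop_nat 1)
      convert this using 2 with n
      simp [Function.comp]
    have := h1.const_mul 2
    simpa using this
  have hδ : Tendsto (fun n : ℕ => 2 * (T / (n + 1))) atTop (𝓝[>] 0) := by
    apply tendsto_nhdsWithin_of_tendsto_nhds_of_eventually_within _ hδ0
    exact Filter.Eventually.of_forall fun n => by
      have := hpos hT n; simp only [Set.mem_Ioi]; positivity
  have key : Tendsto (fun n : ℕ => ⨍ y in Metric.closedBall t (2 * (T / (n + 1))),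
      ‖f y - f t‖) atTop (𝓝 0) := by
    apply htt (fun _ => t) (fun n : ℕ => 2 * (T / (n + 1))) hδ
    exact Filter.Eventually.of_forall fun n => by
      apply Metric.mem_closedBall_self
      have := hpos hT n; positivity
  rw [tendsto_iff_norm_sub_tendsto_zero]
  have key4 : Tendsto (fun n : ℕ => 4 * ⨍ y in Metric.closedBall t (2 * (T / (n + 1))),
      ‖f y - f t‖) atTop (𝓝 0) := by simpa using key.const_mul 4
  apply tendsto_of_tendsto_of_tendsto_of_le_of_le tendsto_const_nhds key4
    (fun n => norm_nonneg _)
  intro n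
  show ‖linApprox f T n t - f t‖ ≤ 4 * ⨍ y in Metric.closedBall t (2 * (T / (n + 1))), ‖f y - f t‖
  obtain ⟨hc1, hc2, hc12⟩ := coeff_spec hT (n := n) ht
  set k := uidx T n t with hkdef
  set c1 : ℝ := (((k : ℝ) + 1) * (T / (n + 1)) - t) / (T / (n + 1)) with hc1def
  set c2 : ℝ := (t - (k : ℝ) * (T / (n + 1))) / (T / (n + 1)) with hc2def
  set v := uavg f T n k with hvdef
  set w := uavg f T n (min (k + 1) n) with hwdef
  have hlin : linApprox f T n t - f t = c1 • (v - f t) + c2 • (w - f t) := by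
    have : linApprox f T n t = c1 • v + c2 • w := rfl
    rw [this, smul_sub, smul_sub]
    rw [show c1 • v - c1 • f t + (c2 • w - c2 • f t)
        = c1 • v + c2 • w - (c1 + c2) • f t by rw [add_smul]; abel]
    rw [hc12, one_smul]
  rw [hlin]
  have hv : ‖v - f t‖ ≤ 4 * ⨍ y in Metric.closedBall t (2 * (T / (n + 1))), ‖f y - f t‖ :=
    norm_uavg_sub_le hT hf ht le_rfl (Nat.le_succ k) (uidx_le T n t)
  have hw : ‖w - f t‖ ≤ 4 * ⨍ y in Metric.closedBall t (2 * (T / (n + 1))), ‖f y - f t‖ :=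
    norm_uavg_sub_le hT hf ht (le_min (Nat.le_succ k) (uidx_le T n t)) (min_le_left _ _)
      (min_le_right _ _)
  calc ‖c1 • (v - f t) + c2 • (w - f t)‖ ≤ ‖c1 • (v - f t)‖ + ‖c2 • (w - f t)‖ := norm_add_le _ _
    _ ≤ c1 * (4 * ⨍ y in Metric.closedBall t (2 * (T / (n + 1))), ‖f y - f t‖)
        + c2 * (4 * ⨍ y in Metric.closedBall t (2 * (T / (n + 1))), ‖f y - f t‖) := by
        rw [norm_smul, norm_smul, Real.norm_eq_abs, Real.norm_eq_abs,
          abs_of_nonneg hc1, abs_of_nonneg hc2]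
        gcongr
    _ = 4 * ⨍ y in Metric.closedBall t (2 * (T / (n + 1))), ‖f y - f t‖ := by
        rw [← add_mul, hc12, one_mul]

lemma measurable_uidx (T : ℝ) (n : ℕ) : Measurable (uidx T n) := by
  unfold uidx
  exact (((measurable_id.mul_const (((n:ℝ)) + 1)).div_const T).nat_floor).min measurable_const

lemma sm_comp_uidx (v : ℕ → X) (T : ℝ) (n : ℕ) :
    StronglyMeasurable (fun t => v (uidx T n t)) := by
  have heq : (fun t => v (uidx T n t)) = fun t =>
      ∑ j ∈ Finset.range (n + 1), ((uidx T n) ⁻¹' {j}).indicator (fun _ => v j) t := by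
    funext t
    rw [Finset.sum_eq_single (uidx T n t)]
    · rw [Set.indicator_of_mem (by simp)]
    · intro j _ hj
      rw [Set.indicator_of_notMem]
      simp only [Set.mem_preimage, Set.mem_singleton_iff]
      exact fun h => hj h.symm
    · intro habs
      exact absurd (Finset.mem_range.2 (Nat.lt_succ_of_le (uidx_le T n t))) habs
  rw [heq]
  apply Finset.stronglyMeasurable_fun_sum
  intro j _
  exact stronglyMeasurable_const.indicator ((measurable_uidx T n) (measurableSet_singleton j))

lemma stronglyMeasurable_linApprox (f : ℝ → X) (T : ℝ) (n : ℕ) :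
    StronglyMeasurable (linApprox f T n) := by
  have hcast : Measurable (fun t => ((uidx T n t : ℝ))) :=
    (measurable_from_nat (f := fun j : ℕ => (j : ℝ))).comp (measurable_uidx T n)
  have hc1 : Measurable (fun t => (((uidx T n t : ℝ) + 1) * (T / (n + 1)) - t) / (T / (n + 1))) :=
    (((hcast.add_const 1).mul_const _).sub measurable_id).div_const _
  have hc2 : Measurable (fun t => (t - (uidx T n t : ℝ) * (T / (n + 1))) / (T / (n + 1))) :=
    ((measurable_id.sub (hcast.mul_const _)).div_const _)
  exact ((hc1.stronglyMeasurable).smul (sm_comp_uidx (fun j => uavg f T n j) T n)).add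
    ((hc2.stronglyMeasurable).smul (sm_comp_uidx (fun j => uavg f T n (min (j + 1) n)) T n))

lemma tendsto_eLpNorm_linApprox (hT : 0 < T) {f : ℝ → X} {M : ℝ}
    (hsm : StronglyMeasurable f) (hbd : ∀ t ∈ Set.Icc 0 T, ‖f t‖ ≤ M)
    {p : ENNReal} (hp1 : 1 ≤ p) (hp : p ≠ ⊤) :
    Tendsto (fun n => eLpNorm (fun t => linApprox f T n t - f t) p
      (volume.restrict (Set.Ioc 0 T))) atTop (𝓝 0) := by
  have hp0 : p ≠ 0 := (lt_of_lt_of_le zero_lt_one hp1).ne'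
  set q : ℝ := p.toReal with hqdef
  have hq : 0 < q := ENNReal.toReal_pos hp0 hp
  set M' : ℝ := max M 0 with hM'def
  have hM'0 : 0 ≤ M' := le_max_right _ _
  have hbd' : ∀ t ∈ Set.Icc 0 T, ‖f t‖ ≤ M' := fun t ht => (hbd t ht).trans (le_max_left _ _)
  set g : ℝ → X := (Set.Icc 0 T).indicator f with hgdef
  have hgf : Set.EqOn f g (Set.Icc 0 T) := fun t ht => (Set.indicator_of_mem ht f).symm
  have hgsm : StronglyMeasurable g := hsm.indicator measurableSet_Icc
  have hgint : MeasureTheory.Integrable g volume := by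
    rw [hgdef, MeasureTheory.integrable_indicator_iff measurableSet_Icc]
    apply MeasureTheory.Measure.integrableOn_of_bounded (M := M')
      (measure_Icc_lt_top).ne hsm.aestronglyMeasurable
    exact (MeasureTheory.ae_restrict_iff' measurableSet_Icc).2
      (Filter.Eventually.of_forall hbd')
  have hgloc : MeasureTheory.LocallyIntegrable g volume := hgint.locallyIntegrable
  have haet := ae_tendsto_linApprox hT hgloc
  have hIocIcc : (Set.Ioc (0:ℝ) T) ⊆ Set.Icc 0 T := Set.Ioc_subset_Icc_self
  -- rewrite eLpNorm
  have herw : ∀ n : ℕ, eLpNorm (fun t => linApprox f T n t - f t) p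
      (volume.restrict (Set.Ioc 0 T))
      = (∫⁻ t, ((‖linApprox f T n t - f t‖₊ : ENNReal)) ^ q
          ∂(volume.restrict (Set.Ioc 0 T))) ^ (1 / q) := fun n =>
    MeasureTheory.eLpNorm_eq_lintegral_rpow_enorm_toReal hp0 hp
  simp only [herw]
  suffices hL : Tendsto (fun n => ∫⁻ t, ((‖linApprox f T n t - f t‖₊ : ENNReal)) ^ q
      ∂(volume.restrict (Set.Ioc 0 T))) atTop (𝓝 0) by
    have hcont : Continuous (fun x : ENNReal => x ^ (1 / q)) := ENNReal.continuous_rpow_const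
    have h2 := (hcont.tendsto 0).comp hL
    rw [show ((0:ENNReal) ^ (1/q)) = 0 from ENNReal.zero_rpow_of_pos (by positivity)] at h2
    exact h2
  have hbound_ne : (ENNReal.ofReal (2 * M') ^ q) ≠ ⊤ :=
    ENNReal.rpow_ne_top_of_nonneg hq.le ENNReal.ofReal_ne_top
  rw [show (0:ENNReal) = ∫⁻ _ in Set.Ioc (0:ℝ) T, (0:ENNReal) by simp]
  apply MeasureTheory.tendsto_lintegral_of_dominated_convergence
    (fun _ => ENNReal.ofReal (2 * M') ^ q)
  · intro n
    exact ((stronglyMeasurable_linApprox f T n).sub hsm).enorm.pow_const q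
  · intro n
    apply (MeasureTheory.ae_restrict_iff' measurableSet_Ioc).2
    apply Filter.Eventually.of_forall
    intro t ht
    have h1 : ‖linApprox f T n t - f t‖ ≤ 2 * M' := by
      calc ‖linApprox f T n t - f t‖ ≤ ‖linApprox f T n t‖ + ‖f t‖ := norm_sub_le _ _
        _ ≤ M' + M' := add_le_add (norm_linApprox_le hT hbd' ht) (hbd' t (hIocIcc ht))
        _ = 2 * M' := by ring
    have h2 : ((‖linApprox f T n t - f t‖₊ : ENNReal)) ≤ ENNReal.ofReal (2 * M') := by
      change ‖linApprox f T n t - f t‖ₑ ≤ _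
      rw [← ofReal_norm]
      exact ENNReal.ofReal_le_ofReal h1
    exact ENNReal.rpow_le_rpow h2 hq.le
  · rw [MeasureTheory.lintegral_const]
    exact ENNReal.mul_ne_top hbound_ne (by simp [measure_Ioc_lt_top.ne])
  · apply (MeasureTheory.ae_restrict_iff' measurableSet_Ioc).2
    filter_upwards [haet] with t htt ht
    have htends : Tendsto (fun n => ‖linApprox f T n t - f t‖) atTop (𝓝 0) := by
      have : ∀ n, ‖linApprox f T n t - f t‖ = ‖linApprox g T n t - g t‖ := by
        intro n
        rw [linApprox_congr hT hgf t, hgf (hIocIcc ht)]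
      simp only [this]
      exact (tendsto_iff_norm_sub_tendsto_zero).1 (htt ht)
    have hof : Tendsto (fun n => ENNReal.ofReal ‖linApprox f T n t - f t‖) atTop (𝓝 0) := by
      have := (ENNReal.continuous_ofReal.tendsto 0).comp htends
      simpa [Function.comp_def] using this
    have := ((ENNReal.continuous_rpow_const (y := q)).tendsto 0).comp hof
    change Tendsto (fun n => ‖linApprox f T n t - f t‖ₑ ^ q) atTop (𝓝 0)
    simpa [Function.comp_def, ofReal_norm, ENNReal.zero_rpow_of_pos hq] using this

section Op

variable {D : Type*} [NormedAddCommGroup D] [NormedSpace ℝ D]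

variable {A : ℝ → D →L[ℝ] X} {C : ℝ}

lemma intA (hT : 0 < T) (hmeas : ∀ x : D, StronglyMeasurable fun t => A t x)
    (hbd : ∀ t ∈ Set.Icc (0 : ℝ) T, ∀ x : D, ‖A t x‖ ≤ C * ‖x‖)
    (x : D) {k : ℕ} (hk : k ≤ n) :
    IntervalIntegrable (fun r => A r x) volume ((k : ℝ) * (T / (n + 1)))
      (((k : ℝ) + 1) * (T / (n + 1))) := by
  have hh := hpos hT n
  have hab : (k : ℝ) * (T / (n + 1)) ≤ ((k : ℝ) + 1) * (T / (n + 1)) := by nlinarith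
  rw [intervalIntegrable_iff_integrableOn_Ioc_of_le hab]
  apply MeasureTheory.Measure.integrableOn_of_bounded (M := C * ‖x‖)
    (measure_Ioc_lt_top).ne (hmeas x).aestronglyMeasurable
  apply (MeasureTheory.ae_restrict_iff' measurableSet_Ioc).2
  apply Filter.Eventually.of_forall
  intro r hr
  have hkn : ((k:ℝ)+1) ≤ (n:ℝ)+1 := by exact_mod_cast Nat.succ_le_succ hk
  have hTeq : ((n:ℝ)+1) * (T/(n+1)) = T := by field_simp
  have hr' : r ∈ Set.Icc (0:ℝ) T := by
    constructor
    · have : (0:ℝ) ≤ (k : ℝ) * (T / (n + 1)) := by positivity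
      linarith [hr.1]
    · have : ((k:ℝ)+1) * (T/(n+1)) ≤ T := by nlinarith
      linarith [hr.2]
  exact hbd r hr' x

lemma uavg_apply_sub (hT : 0 < T) (hmeas : ∀ x : D, StronglyMeasurable fun t => A t x)
    (hbd : ∀ t ∈ Set.Icc (0 : ℝ) T, ∀ x : D, ‖A t x‖ ≤ C * ‖x‖)
    (x y : D) {k : ℕ} (hk : k ≤ n) :
    uavg (fun r => A r (x - y)) T n k
      = uavg (fun r => A r x) T n k - uavg (fun r => A r y) T n k := by
  unfold uavg
  rw [← smul_sub]
  congr 1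
  rw [← intervalIntegral.integral_sub (intA hT hmeas hbd x hk) (intA hT hmeas hbd y hk)]
  apply intervalIntegral.integral_congr
  intro r _
  simp [map_sub]

lemma opLin_sub (hT : 0 < T) (hmeas : ∀ x : D, StronglyMeasurable fun t => A t x)
    (hbd : ∀ t ∈ Set.Icc (0 : ℝ) T, ∀ x : D, ‖A t x‖ ≤ C * ‖x‖)
    (n : ℕ) (t : ℝ) (x y : D) :
    opLin A T n t (x - y) = opLin A T n t x - opLin A T n t y := by
  unfold opLin linApprox
  rw [uavg_apply_sub hT hmeas hbd x y (uidx_le T n t),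
    uavg_apply_sub hT hmeas hbd x y (min_le_right _ _), smul_sub, smul_sub]
  abel

lemma opLin_zero (n : ℕ) (t : ℝ) : opLin A T n t 0 = 0 := by
  unfold opLin linApprox uavg
  have : ∀ a b : ℝ, (∫ r in a..b, A r (0:D)) = 0 := by
    intro a b
    simp
  rw [this, this]
  simp

lemma norm_opLin_le (hT : 0 < T)
    (hbd : ∀ t ∈ Set.Icc (0 : ℝ) T, ∀ x : D, ‖A t x‖ ≤ C * ‖x‖)
    {t : ℝ} (ht : t ∈ Set.Ioc 0 T) (x : D) (n : ℕ) :
    ‖opLin A T n t x‖ ≤ C * ‖x‖ :=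
  norm_linApprox_le hT (fun r hr => hbd r hr x) ht

lemma norm_opLin_le_general (hT : 0 < T)
    (hbd : ∀ t ∈ Set.Icc (0 : ℝ) T, ∀ x : D, ‖A t x‖ ≤ C * ‖x‖)
    (t : ℝ) (x : D) (n : ℕ) :
    ‖opLin A T n t x‖ ≤ (|(((uidx T n t : ℝ) + 1) * (T / (n + 1)) - t) / (T / (n + 1))| +
      |(t - (uidx T n t : ℝ) * (T / (n + 1))) / (T / (n + 1))|) * (C * ‖x‖) := by
  have hv : ‖uavg (fun r => A r x) T n (uidx T n t)‖ ≤ C * ‖x‖ :=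
    norm_uavg_le hT (fun r hr => hbd r hr x) (uidx_le T n t)
  have hw : ‖uavg (fun r => A r x) T n (min (uidx T n t + 1) n)‖ ≤ C * ‖x‖ :=
    norm_uavg_le hT (fun r hr => hbd r hr x) (min_le_right _ _)
  have hC : 0 ≤ C * ‖x‖ := le_trans (norm_nonneg _) hv
  show ‖_ • uavg (fun r => A r x) T n (uidx T n t) +
      _ • uavg (fun r => A r x) T n (min (uidx T n t + 1) n)‖ ≤ _
  calc ‖_ • uavg (fun r => A r x) T n (uidx T n t) +
      _ • uavg (fun r => A r x) T n (min (uidx T n t + 1) n)‖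
      ≤ ‖_ • uavg (fun r => A r x) T n (uidx T n t)‖ +
        ‖_ • uavg (fun r => A r x) T n (min (uidx T n t + 1) n)‖ := norm_add_le _ _
    _ ≤ |(((uidx T n t : ℝ) + 1) * (T / (n + 1)) - t) / (T / (n + 1))| * (C * ‖x‖) +
        |(t - (uidx T n t : ℝ) * (T / (n + 1))) / (T / (n + 1))| * (C * ‖x‖) := by
        rw [norm_smul, norm_smul, Real.norm_eq_abs, Real.norm_eq_abs]
        gcongr
    _ = _ := by ring

lemma sm_opLin_simple (hT : 0 < T) (hmeas : ∀ x : D, StronglyMeasurable fun t => A t x)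
    (hbd : ∀ t ∈ Set.Icc (0 : ℝ) T, ∀ x : D, ‖A t x‖ ≤ C * ‖x‖)
    (n : ℕ) (s : MeasureTheory.SimpleFunc ℝ D) :
    StronglyMeasurable (fun t => opLin A T n t (s t)) := by
  induction s using MeasureTheory.SimpleFunc.induction with
  | const c hE =>
    rename_i E
    have heq : (fun t => opLin A T n t
        ((MeasureTheory.SimpleFunc.piecewise E hE (MeasureTheory.SimpleFunc.const ℝ c)
          (MeasureTheory.SimpleFunc.const ℝ 0)) t))
        = E.indicator (fun t => opLin A T n t c) := by
      funext t
      by_cases htE : t ∈ E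
      · simp [MeasureTheory.SimpleFunc.piecewise_apply, htE, Set.indicator_of_mem]
      · simp [MeasureTheory.SimpleFunc.piecewise_apply, htE, Set.indicator_of_notMem,
          opLin_zero]
    rw [heq]
    exact (stronglyMeasurable_linApprox (fun r => A r c) T n).indicator hE
  | @add f g hdisj hf hg =>
    have heq : (fun t => opLin A T n t ((f + g) t))
        = fun t => opLin A T n t (f t) + opLin A T n t (g t) := by
      funext t
      rw [MeasureTheory.SimpleFunc.add_apply]
      by_cases hf0 : f t = 0
      · rw [hf0, zero_add, opLin_zero, zero_add]
      · have hg0 : g t = 0 := by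
          by_contra hg0
          exact Set.disjoint_left.1 hdisj (Function.mem_support.2 hf0)
            (Function.mem_support.2 hg0)
        rw [hg0, add_zero, opLin_zero, add_zero]
    rw [heq]
    exact hf.add hg


lemma sm_A_simple (hmeas : ∀ x : D, StronglyMeasurable fun t => A t x)
    (s : MeasureTheory.SimpleFunc ℝ D) :
    StronglyMeasurable (fun t => A t (s t)) := by
  induction s using MeasureTheory.SimpleFunc.induction with
  | const c hE =>
    rename_i E
    have heq : (fun t => A t
        ((MeasureTheory.SimpleFunc.piecewise E hE (MeasureTheory.SimpleFunc.const ℝ c)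
          (MeasureTheory.SimpleFunc.const ℝ 0)) t))
        = E.indicator (fun t => A t c) := by
      funext t
      by_cases htE : t ∈ E
      · simp [MeasureTheory.SimpleFunc.piecewise_apply, htE, Set.indicator_of_mem]
      · simp [MeasureTheory.SimpleFunc.piecewise_apply, htE, Set.indicator_of_notMem]
    rw [heq]
    exact (hmeas c).indicator hE
  | @add f g hdisj hf hg =>
    have heq : (fun t => A t ((f + g) t))
        = fun t => A t (f t) + A t (g t) := by
      funext t
      rw [MeasureTheory.SimpleFunc.add_apply, map_add]
    rw [heq]
    exact hf.add hg

lemma aesm_A_comp (hmeas : ∀ x : D, StronglyMeasurable fun t => A t x)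
    {v : ℝ → D} (hv : MeasureTheory.AEStronglyMeasurable v (volume.restrict (Set.Ioc 0 T))) :
    MeasureTheory.AEStronglyMeasurable (fun t => A t (v t)) (volume.restrict (Set.Ioc 0 T)) := by
  obtain ⟨w, hw, hvw⟩ := hv
  refine ⟨fun t => A t (w t), ?_, ?_⟩
  · apply stronglyMeasurable_of_tendsto atTop (fun k => sm_A_simple hmeas (hw.approx k))
    rw [tendsto_pi_nhds]
    intro t
    exact ((A t).continuous.tendsto (w t)).comp (hw.tendsto_approx t)
  · filter_upwards [hvw] with t ht
    rw [ht]

lemma aesm_opLin_comp (hT : 0 < T) (hmeas : ∀ x : D, StronglyMeasurable fun t => A t x)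
    (hbd : ∀ t ∈ Set.Icc (0 : ℝ) T, ∀ x : D, ‖A t x‖ ≤ C * ‖x‖) (n : ℕ)
    {v : ℝ → D} (hv : MeasureTheory.AEStronglyMeasurable v (volume.restrict (Set.Ioc 0 T))) :
    MeasureTheory.AEStronglyMeasurable (fun t => opLin A T n t (v t))
      (volume.restrict (Set.Ioc 0 T)) := by
  obtain ⟨w, hw, hvw⟩ := hv
  refine ⟨fun t => opLin A T n t (w t), ?_, ?_⟩
  · apply stronglyMeasurable_of_tendsto atTop
      (fun k => sm_opLin_simple hT hmeas hbd n (hw.approx k))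
    rw [tendsto_pi_nhds]
    intro t
    rw [tendsto_iff_norm_sub_tendsto_zero]
    set Kt : ℝ := (|(((uidx T n t : ℝ) + 1) * (T / (n + 1)) - t) / (T / (n + 1))| +
      |(t - (uidx T n t : ℝ) * (T / (n + 1))) / (T / (n + 1))|) with hKt
    have hub : ∀ k, ‖opLin A T n t ((hw.approx k) t) - opLin A T n t (w t)‖
        ≤ Kt * (C * ‖(hw.approx k) t - w t‖) := by
      intro k
      rw [← opLin_sub hT hmeas hbd]
      exact norm_opLin_le_general hT hbd t _ n
    have hnt : Tendsto (fun k => ‖(hw.approx k) t - w t‖) atTop (𝓝 0) :=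
      tendsto_iff_norm_sub_tendsto_zero.1 (hw.tendsto_approx t)
    have hup : Tendsto (fun k => Kt * (C * ‖(hw.approx k) t - w t‖)) atTop (𝓝 0) := by
      have := (hnt.const_mul C).const_mul Kt
      simpa using this
    exact tendsto_of_tendsto_of_tendsto_of_le_of_le tendsto_const_nhds hup
      (fun k => norm_nonneg _) hub
  · filter_upwards [hvw] with t ht
    rw [ht]

lemma tendsto_opLin_simple (hT : 0 < T) (hmeas : ∀ x : D, StronglyMeasurable fun t => A t x)
    (hbd : ∀ t ∈ Set.Icc (0 : ℝ) T, ∀ x : D, ‖A t x‖ ≤ C * ‖x‖)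
    {p : ENNReal} (hp1 : 1 ≤ p) (hp : p ≠ ⊤) (s : MeasureTheory.SimpleFunc ℝ D) :
    Tendsto (fun n => eLpNorm (fun t => opLin A T n t (s t) - A t (s t)) p
      (volume.restrict (Set.Ioc 0 T))) atTop (𝓝 0) := by
  induction s using MeasureTheory.SimpleFunc.induction with
  | const c hE =>
    rename_i E
    have heq : ∀ n : ℕ, (fun t => opLin A T n t
        ((MeasureTheory.SimpleFunc.piecewise E hE (MeasureTheory.SimpleFunc.const ℝ c)
          (MeasureTheory.SimpleFunc.const ℝ 0)) t) - A t
        ((MeasureTheory.SimpleFunc.piecewise E hE (MeasureTheory.SimpleFunc.const ℝ c)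
          (MeasureTheory.SimpleFunc.const ℝ 0)) t))
        = E.indicator (fun t => opLin A T n t c - A t c) := by
      intro n
      funext t
      by_cases htE : t ∈ E
      · simp [MeasureTheory.SimpleFunc.piecewise_apply, htE, Set.indicator_of_mem]
      · simp [MeasureTheory.SimpleFunc.piecewise_apply, htE, Set.indicator_of_notMem,
          opLin_zero]
    simp only [heq]
    have hbase : Tendsto (fun n => eLpNorm (fun t => opLin A T n t c - A t c) p
        (volume.restrict (Set.Ioc 0 T))) atTop (𝓝 0) := by
      have := tendsto_eLpNorm_linApprox hT (hmeas c)
        (fun t ht => hbd t ht c) hp1 hp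
      exact this
    exact tendsto_of_tendsto_of_tendsto_of_le_of_le tendsto_const_nhds hbase
      (fun n => zero_le) (fun n => MeasureTheory.eLpNorm_indicator_le _)
  | @add f g hdisj hf hg =>
    have heq : ∀ n : ℕ, (fun t => opLin A T n t ((f + g) t) - A t ((f + g) t))
        = (fun t => opLin A T n t (f t) - A t (f t))
          + (fun t => opLin A T n t (g t) - A t (g t)) := by
      intro n
      funext t
      rw [MeasureTheory.SimpleFunc.add_apply, Pi.add_apply]
      by_cases hf0 : f t = 0
      · rw [hf0, zero_add, opLin_zero]
        simp
      · have hg0 : g t = 0 := by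
          by_contra hg0
          exact Set.disjoint_left.1 hdisj (Function.mem_support.2 hf0)
            (Function.mem_support.2 hg0)
        rw [hg0, add_zero, opLin_zero]
        simp
    simp only [heq]
    have hle : ∀ n : ℕ, eLpNorm ((fun t => opLin A T n t (f t) - A t (f t))
          + (fun t => opLin A T n t (g t) - A t (g t))) p (volume.restrict (Set.Ioc 0 T))
        ≤ eLpNorm (fun t => opLin A T n t (f t) - A t (f t)) p (volume.restrict (Set.Ioc 0 T))
          + eLpNorm (fun t => opLin A T n t (g t) - A t (g t)) p
            (volume.restrict (Set.Ioc 0 T)) := by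
      intro n
      exact MeasureTheory.eLpNorm_add_le
        (((sm_opLin_simple hT hmeas hbd n f).sub (sm_A_simple hmeas f)).aestronglyMeasurable)
        (((sm_opLin_simple hT hmeas hbd n g).sub (sm_A_simple hmeas g)).aestronglyMeasurable)
        hp1
    have hsum : Tendsto (fun n =>
        eLpNorm (fun t => opLin A T n t (f t) - A t (f t)) p (volume.restrict (Set.Ioc 0 T))
          + eLpNorm (fun t => opLin A T n t (g t) - A t (g t)) p
            (volume.restrict (Set.Ioc 0 T))) atTop (𝓝 0) := by
      have := hf.add hg
      simpa using this
    exact tendsto_of_tendsto_of_tendsto_of_le_of_le tendsto_const_nhds hsum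
      (fun n => zero_le) hle

end Op

end Lemmas

/-- Let `D ↪ X` be a continuous dense embedding of Banach spaces and
`A : [0,T] → L(D,X)` bounded and strongly measurable.  If `u_Λ → u` in
`L^p(0,T;D)`, then `A_Λ^L(·)u_Λ(·) → A(·)u(·)` in `L^p(0,T;X)` as the mesh of
the uniform subdivision `Λ` tends to `0`, where `A_Λ^L` is the piecewise linear
interpolation of the interval averages of `A`. -/
theorem opLin_apply_tendsto_Lp
    {D : Type*} [NormedAddCommGroup D] [NormedSpace ℝ D] [CompleteSpace D]
    (ι : D →L[ℝ] X) (hinj : Function.Injective ι) (hdense : DenseRange ι)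
    (T : ℝ) (hT : 0 < T) (A : ℝ → D →L[ℝ] X)
    (hmeas : ∀ x : D, StronglyMeasurable fun t => A t x)
    (C : ℝ) (hbd : ∀ t ∈ Set.Icc (0 : ℝ) T, ∀ x : D, ‖A t x‖ ≤ C * ‖x‖)
    (p : ENNReal) (hp1 : 1 ≤ p) (hp : p ≠ ⊤)
    (u : ℝ → D) (uΛ : ℕ → ℝ → D)
    (hu : MemLp u p (volume.restrict (Set.Ioc 0 T)))
    (huΛ : ∀ n, MemLp (uΛ n) p (volume.restrict (Set.Ioc 0 T)))
    (hconv : Tendsto (fun n => eLpNorm (fun t => uΛ n t - u t) p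
        (volume.restrict (Set.Ioc 0 T))) atTop (nhds 0)) :
    Tendsto (fun n => eLpNorm (fun t => opLin A T n t (uΛ n t) - A t (u t)) p
        (volume.restrict (Set.Ioc 0 T))) atTop (nhds 0) := by
  classical
  set C' : ℝ := max C 0 with hC'def
  have hC'0 : 0 ≤ C' := le_max_right _ _
  have hbd' : ∀ t ∈ Set.Icc (0 : ℝ) T, ∀ x : D, ‖A t x‖ ≤ C' * ‖x‖ := fun t ht x =>
    (hbd t ht x).trans (mul_le_mul_of_nonneg_right (le_max_left _ _) (norm_nonneg x))
  set c : ENNReal := ENNReal.ofReal C' with hcdef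
  have hcne : c ≠ ⊤ := ENNReal.ofReal_ne_top
  -- generic smul bound
  have hsmul_bound : ∀ (v : ℝ → D) (n : ℕ),
      eLpNorm (fun t => opLin A T n t (v t)) p (volume.restrict (Set.Ioc 0 T))
        ≤ c * eLpNorm (fun t => v t) p (volume.restrict (Set.Ioc 0 T)) := by
    intro v n
    have h1 : eLpNorm (fun t => opLin A T n t (v t)) p (volume.restrict (Set.Ioc 0 T))
        ≤ eLpNorm (C' • (fun t => v t)) p (volume.restrict (Set.Ioc 0 T)) := by
      apply MeasureTheory.eLpNorm_mono_ae
      apply (MeasureTheory.ae_restrict_iff' measurableSet_Ioc).2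
      apply Filter.Eventually.of_forall
      intro t ht
      have := norm_opLin_le hT hbd' ht (v t) n
      rw [Pi.smul_apply, norm_smul, Real.norm_eq_abs, abs_of_nonneg hC'0]
      exact this
    rw [MeasureTheory.eLpNorm_const_smul] at h1
    rwa [Real.enorm_eq_ofReal hC'0] at h1
  -- A applied bound
  have hA_bound : ∀ (v : ℝ → D),
      eLpNorm (fun t => A t (v t)) p (volume.restrict (Set.Ioc 0 T))
        ≤ c * eLpNorm (fun t => v t) p (volume.restrict (Set.Ioc 0 T)) := by
    intro v
    have h1 : eLpNorm (fun t => A t (v t)) p (volume.restrict (Set.Ioc 0 T))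
        ≤ eLpNorm (C' • (fun t => v t)) p (volume.restrict (Set.Ioc 0 T)) := by
      apply MeasureTheory.eLpNorm_mono_ae
      apply (MeasureTheory.ae_restrict_iff' measurableSet_Ioc).2
      apply Filter.Eventually.of_forall
      intro t ht
      rw [Pi.smul_apply, norm_smul, Real.norm_eq_abs, abs_of_nonneg hC'0]
      exact hbd' t (Set.Ioc_subset_Icc_self ht) (v t)
    rw [MeasureTheory.eLpNorm_const_smul] at h1
    rwa [Real.enorm_eq_ofReal hC'0] at h1
  -- term 2
  have hterm2 : Tendsto (fun n => eLpNorm (fun t => opLin A T n t (u t) - A t (u t)) p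
      (volume.restrict (Set.Ioc 0 T))) atTop (𝓝 0) := by
    rw [ENNReal.tendsto_atTop_zero]
    intro ε hε
    by_cases hεtop : ε = ⊤
    · exact ⟨0, fun n _ => hεtop ▸ le_top⟩
    have h2c1 : (2 * c + 1 : ENNReal) ≠ ⊤ := by
      apply ENNReal.add_ne_top.2
      exact ⟨ENNReal.mul_ne_top (by simp) hcne, by simp⟩
    set δ : ENNReal := (ε / 2) / (2 * c + 1) with hδdef
    have hδ0 : δ ≠ 0 := by
      apply ENNReal.div_ne_zero.2
      refine ⟨?_, h2c1⟩
      intro habs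
      rw [ENNReal.div_eq_zero_iff] at habs
      rcases habs with h | h
      · exact hε.ne' h
      · simp at h
    obtain ⟨s, hs, _⟩ := hu.exists_simpleFunc_eLpNorm_sub_lt hp hδ0
    have hsimple := tendsto_opLin_simple hT hmeas hbd' hp1 hp s
    rw [ENNReal.tendsto_atTop_zero] at hsimple
    obtain ⟨N, hN⟩ := hsimple (ε / 2) (ENNReal.div_pos hε.ne' (by simp))
    refine ⟨N, fun n hn => ?_⟩
    have hdecomp : (fun t => opLin A T n t (u t) - A t (u t))
        = (fun t => opLin A T n t (u t - s t))
          + ((fun t => opLin A T n t (s t) - A t (s t)) + (fun t => A t (s t - u t))) := by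
      funext t
      simp only [Pi.add_apply]
      rw [opLin_sub hT hmeas hbd', map_sub]
      abel
    have haesm1 : MeasureTheory.AEStronglyMeasurable (fun t => opLin A T n t (u t - s t))
        (volume.restrict (Set.Ioc 0 T)) :=
      aesm_opLin_comp hT hmeas hbd' n (hu.1.sub s.stronglyMeasurable.aestronglyMeasurable)
    have haesm2 : MeasureTheory.AEStronglyMeasurable
        (fun t => opLin A T n t (s t) - A t (s t)) (volume.restrict (Set.Ioc 0 T)) :=
      ((sm_opLin_simple hT hmeas hbd' n s).sub (sm_A_simple hmeas s)).aestronglyMeasurable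
    have haesm3 : MeasureTheory.AEStronglyMeasurable (fun t => A t (s t - u t))
        (volume.restrict (Set.Ioc 0 T)) :=
      aesm_A_comp hmeas (s.stronglyMeasurable.aestronglyMeasurable.sub hu.1)
    have hE1 : eLpNorm (fun t => opLin A T n t (u t - s t)) p (volume.restrict (Set.Ioc 0 T))
        ≤ c * δ := by
      refine (hsmul_bound (fun t => u t - s t) n).trans ?_
      apply mul_le_mul_right
      refine le_of_lt (lt_of_le_of_lt (le_of_eq ?_) hs)
      rfl
    have hE3 : eLpNorm (fun t => A t (s t - u t)) p (volume.restrict (Set.Ioc 0 T))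
        ≤ c * δ := by
      refine (hA_bound (fun t => s t - u t)).trans ?_
      apply mul_le_mul_right
      have : eLpNorm (fun t => s t - u t) p (volume.restrict (Set.Ioc 0 T))
          = eLpNorm (fun t => u t - s t) p (volume.restrict (Set.Ioc 0 T)) := by
        rw [← MeasureTheory.eLpNorm_neg (f := fun t => s t - u t)]
        congr 1
        funext t
        simp
      rw [this]
      refine le_of_lt (lt_of_le_of_lt (le_of_eq ?_) hs)
      rfl
    calc eLpNorm (fun t => opLin A T n t (u t) - A t (u t)) p (volume.restrict (Set.Ioc 0 T))
        = eLpNorm ((fun t => opLin A T n t (u t - s t))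
          + ((fun t => opLin A T n t (s t) - A t (s t)) + (fun t => A t (s t - u t)))) p
            (volume.restrict (Set.Ioc 0 T)) := by rw [← hdecomp]
      _ ≤ eLpNorm (fun t => opLin A T n t (u t - s t)) p (volume.restrict (Set.Ioc 0 T))
          + eLpNorm ((fun t => opLin A T n t (s t) - A t (s t)) + (fun t => A t (s t - u t)))
            p (volume.restrict (Set.Ioc 0 T)) :=
          MeasureTheory.eLpNorm_add_le haesm1 (haesm2.add haesm3) hp1
      _ ≤ eLpNorm (fun t => opLin A T n t (u t - s t)) p (volume.restrict (Set.Ioc 0 T))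
          + (eLpNorm (fun t => opLin A T n t (s t) - A t (s t)) p (volume.restrict (Set.Ioc 0 T))
            + eLpNorm (fun t => A t (s t - u t)) p (volume.restrict (Set.Ioc 0 T))) :=
          add_le_add_right (MeasureTheory.eLpNorm_add_le haesm2 haesm3 hp1) _
      _ ≤ c * δ + (ε / 2 + c * δ) := by
          exact add_le_add hE1 (add_le_add (hN n hn) hE3)
      _ = (c * δ + c * δ) + ε / 2 := by ring
      _ ≤ ε / 2 + ε / 2 := by
          apply add_le_add_left
          calc c * δ + c * δ = 2 * c * δ := by ring
            _ ≤ (2 * c + 1) * δ := by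
                apply mul_le_mul_left
                exact le_add_of_nonneg_right zero_le
            _ ≤ ε / 2 := by
                rw [hδdef]
                exact ENNReal.mul_div_le
      _ = ε := ENNReal.add_halves ε
  -- term 1
  have hterm1 : Tendsto (fun n => eLpNorm (fun t => opLin A T n t (uΛ n t - u t)) p
      (volume.restrict (Set.Ioc 0 T))) atTop (𝓝 0) := by
    have hup : Tendsto (fun n => c * eLpNorm (fun t => uΛ n t - u t) p
        (volume.restrict (Set.Ioc 0 T))) atTop (𝓝 0) := by
      have := ENNReal.Tendsto.const_mul (a := c) hconv (Or.inr hcne)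
      simpa using this
    exact tendsto_of_tendsto_of_tendsto_of_le_of_le tendsto_const_nhds hup
      (fun n => zero_le) (fun n => hsmul_bound (fun t => uΛ n t - u t) n)
  -- combine
  have hle : ∀ n : ℕ, eLpNorm (fun t => opLin A T n t (uΛ n t) - A t (u t)) p
      (volume.restrict (Set.Ioc 0 T))
      ≤ eLpNorm (fun t => opLin A T n t (uΛ n t - u t)) p (volume.restrict (Set.Ioc 0 T))
        + eLpNorm (fun t => opLin A T n t (u t) - A t (u t)) p
          (volume.restrict (Set.Ioc 0 T)) := by
    intro n
    have hdecomp : (fun t => opLin A T n t (uΛ n t) - A t (u t))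
        = (fun t => opLin A T n t (uΛ n t - u t))
          + (fun t => opLin A T n t (u t) - A t (u t)) := by
      funext t
      simp only [Pi.add_apply]
      rw [opLin_sub hT hmeas hbd']
      abel
    rw [hdecomp]
    exact MeasureTheory.eLpNorm_add_le
      (aesm_opLin_comp hT hmeas hbd' n ((huΛ n).1.sub hu.1))
      ((aesm_opLin_comp hT hmeas hbd' n hu.1).sub (aesm_A_comp hmeas hu.1)) hp1
  have hsum : Tendsto (fun n =>
      eLpNorm (fun t => opLin A T n t (uΛ n t - u t)) p (volume.restrict (Set.Ioc 0 T))
        + eLpNorm (fun t => opLin A T n t (u t) - A t (u t)) p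
          (volume.restrict (Set.Ioc 0 T))) atTop (𝓝 0) := by
    have := hterm1.add hterm2
    simpa using this
  exact tendsto_of_tendsto_of_tendsto_of_le_of_le tendsto_const_nhds hsum
    (fun n => zero_le) hle


end
end

section
/- Let a be a non-autonomous closed symmetric form on [0,T] × V × V with constants M, α (and ω = 0). Define the piecewise-linear interpolated form a_Λ^L(t;u,v) := ((λ_{k+1}−t)/(λ_{k+1}−λ_k)) a_k(u,v) + ((t−λ_k)/(λ_{k+1}−λ_k)) a_{k+1}(u,v) for t ∈ [λ_k, λ_{k+1}], where a_k is the average of a over [λ_k, λ_{k+1}]. Then a_Λ^L is a symmetric non-autonomous closed form with the same constants M, α, and t ↦ a_Λ^L(t;u,v) is Lipschitz continuous on [0,T] for each fixed u, v ∈ V. -/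
open MeasureTheory Filter intervalIntegral

noncomputable section

variable {X : Type*} [NormedAddCommGroup X] [NormedSpace ℝ X] [CompleteSpace X]

/-- The piecewise linear interpolation `a_Λ^L` of the interval averages of a
non-autonomous form `a`. -/
def formLin {V : Type*} [NormedAddCommGroup V] [InnerProductSpace ℂ V]
    (a : ℝ → V →ₗ⋆[ℂ] V →ₗ[ℂ] ℂ) (T : ℝ) (n : ℕ) (t : ℝ) (u v : V) : ℂ :=
  linApprox (fun r => a r u v) T n t

namespace FLaux

variable {T : ℝ} {n : ℕ}

lemma hstep_pos (hT : 0 < T) (n : ℕ) : 0 < T / (n + 1 : ℝ) := by positivity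

lemma subInt_subset (hT : 0 < T) {k : ℕ} (hk : k ≤ n) :
    Set.uIcc ((k : ℝ) * (T / (n + 1))) (((k : ℝ) + 1) * (T / (n + 1))) ⊆
      Set.Icc (0 : ℝ) T := by
  have h0 : 0 < T / (n + 1 : ℝ) := hstep_pos hT n
  rw [Set.uIcc_of_le (by nlinarith)]
  intro x hx
  have hkn : (k : ℝ) + 1 ≤ (n : ℝ) + 1 := by exact_mod_cast Nat.succ_le_succ hk
  have hub : ((k : ℝ) + 1) * (T / (n + 1)) ≤ T := by
    have : ((n : ℝ) + 1) * (T / (n + 1)) = T := by field_simp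
    nlinarith
  constructor
  · have : 0 ≤ (k : ℝ) * (T / (n + 1)) := by positivity
    linarith [hx.1]
  · linarith [hx.2]

lemma integrable_sub (hT : 0 < T) {f : ℝ → ℂ} (hm : Measurable f) {C : ℝ}
    (hb : ∀ t ∈ Set.Icc (0 : ℝ) T, ‖f t‖ ≤ C) {k : ℕ} (hk : k ≤ n) :
    IntervalIntegrable f volume ((k : ℝ) * (T / (n + 1))) (((k : ℝ) + 1) * (T / (n + 1))) := by
  apply IntervalIntegrable.mono_fun (_root_.intervalIntegrable_const (c := C))
  · exact hm.aestronglyMeasurable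
  · apply (ae_restrict_iff' measurableSet_uIoc).2
    apply Eventually.of_forall
    intro x hx
    have hxT : x ∈ Set.Icc (0 : ℝ) T :=
      subInt_subset hT hk (Set.uIoc_subset_uIcc hx)
    have := hb x hxT
    have : ‖f x‖ ≤ C := this
    simpa [Real.norm_eq_abs] using this.trans (le_abs_self C)

lemma uavg_norm_le (hT : 0 < T) {f : ℝ → ℂ} {C : ℝ}
    (hb : ∀ t ∈ Set.Icc (0 : ℝ) T, ‖f t‖ ≤ C) {k : ℕ} (hk : k ≤ n) :
    ‖uavg f T n k‖ ≤ C := by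
  have h0 : 0 < T / (n + 1 : ℝ) := hstep_pos hT n
  have hInt : ‖∫ r in ((k : ℝ) * (T / (n + 1)))..(((k : ℝ) + 1) * (T / (n + 1))), f r‖ ≤
      C * |(((k : ℝ) + 1) * (T / (n + 1))) - ((k : ℝ) * (T / (n + 1)))| := by
    apply intervalIntegral.norm_integral_le_of_norm_le_const
    intro x hx
    exact hb x (subInt_subset hT hk (Set.uIoc_subset_uIcc hx))
  have habs : |(((k : ℝ) + 1) * (T / (n + 1))) - ((k : ℝ) * (T / (n + 1)))| = T / (n + 1) := by
    rw [abs_of_nonneg (by nlinarith)]; ring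
  rw [habs] at hInt
  have : ‖uavg f T n k‖ = ((n : ℝ) + 1) / T *
      ‖∫ r in ((k : ℝ) * (T / (n + 1)))..(((k : ℝ) + 1) * (T / (n + 1))), f r‖ := by
    rw [uavg, norm_smul, Real.norm_eq_abs, abs_of_nonneg (by positivity)]
  rw [this]
  have h1 : ((n : ℝ) + 1) / T * (C * (T / (n + 1))) = C := by field_simp
  calc ((n : ℝ) + 1) / T *
      ‖∫ r in ((k : ℝ) * (T / (n + 1)))..(((k : ℝ) + 1) * (T / (n + 1))), f r‖
      ≤ ((n : ℝ) + 1) / T * (C * (T / (n + 1))) := by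
        apply mul_le_mul_of_nonneg_left hInt (by positivity)
    _ = C := h1

lemma uavg_conj {f : ℝ → ℂ} {k : ℕ}
    (hf : IntervalIntegrable f volume ((k : ℝ) * (T / (n + 1)))
      (((k : ℝ) + 1) * (T / (n + 1)))) :
    uavg (fun r => (starRingEnd ℂ) (f r)) T n k = (starRingEnd ℂ) (uavg f T n k) := by
  have h := (Complex.conjCLE.toContinuousLinearMap).intervalIntegral_comp_comm hf
    (μ := volume) (a := ((k : ℝ) * (T / (n + 1)))) (b := (((k : ℝ) + 1) * (T / (n + 1))))
  simp only [ContinuousLinearEquiv.coe_coe, Complex.conjCLE_apply] at h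
  rw [uavg, uavg, h]
  simp [Complex.ext_iff, Complex.smul_re, Complex.smul_im]

lemma uavg_re_ge (hT : 0 < T) {f : ℝ → ℂ} {c : ℝ}
    (hm : Measurable f) {C : ℝ} (hb : ∀ t ∈ Set.Icc (0 : ℝ) T, ‖f t‖ ≤ C)
    (hc : ∀ t ∈ Set.Icc (0 : ℝ) T, c ≤ (f t).re) {k : ℕ} (hk : k ≤ n) :
    c ≤ (uavg f T n k).re := by
  have h0 : 0 < T / (n + 1 : ℝ) := hstep_pos hT n
  have hab : (k : ℝ) * (T / (n + 1)) ≤ ((k : ℝ) + 1) * (T / (n + 1)) := by nlinarith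
  have hf := integrable_sub hT hm hb hk (n := n)
  have hre := (Complex.reCLM).intervalIntegral_comp_comm hf
    (μ := volume)
  have hre_int : IntervalIntegrable (fun r => (f r).re) volume
      ((k : ℝ) * (T / (n + 1))) (((k : ℝ) + 1) * (T / (n + 1))) := by
    apply hf.mono_fun (Complex.measurable_re.comp hm).aestronglyMeasurable
    apply Eventually.of_forall
    intro x
    simpa using Complex.abs_re_le_norm (f x)
  have hmono : c * (T / (n + 1)) ≤
      ∫ r in ((k : ℝ) * (T / (n + 1)))..(((k : ℝ) + 1) * (T / (n + 1))), (f r).re := by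
    have hconst : (∫ _ in ((k : ℝ) * (T / (n + 1)))..(((k : ℝ) + 1) * (T / (n + 1))), c)
        = c * (T / (n + 1)) := by
      rw [intervalIntegral.integral_const, smul_eq_mul]
      ring_nf
    rw [← hconst]
    apply intervalIntegral.integral_mono_on hab intervalIntegrable_const hre_int
    intro x hx
    exact hc x (subInt_subset hT hk (by rw [Set.uIcc_of_le hab]; exact hx))
  simp only [Complex.reCLM_apply] at hre
  have hval : (uavg f T n k).re = ((n : ℝ) + 1) / T *
      ∫ r in ((k : ℝ) * (T / (n + 1)))..(((k : ℝ) + 1) * (T / (n + 1))), (f r).re := by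
    rw [uavg, Complex.smul_re, smul_eq_mul, ← hre]
  rw [hval]
  have : ((n : ℝ) + 1) / T * (c * (T / (n + 1))) = c := by field_simp
  nlinarith [mul_le_mul_of_nonneg_left hmono (le_of_lt (by positivity : (0:ℝ) < ((n : ℝ) + 1) / T))]

lemma uavg_add {f g : ℝ → ℂ} {k : ℕ}
    (hf : IntervalIntegrable f volume ((k : ℝ) * (T / (n + 1)))
      (((k : ℝ) + 1) * (T / (n + 1))))
    (hg : IntervalIntegrable g volume ((k : ℝ) * (T / (n + 1)))
      (((k : ℝ) + 1) * (T / (n + 1)))) :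
    uavg (fun r => f r + g r) T n k = uavg f T n k + uavg g T n k := by
  rw [uavg, uavg, uavg, intervalIntegral.integral_add hf hg, smul_add]

lemma uavg_const_mul (c : ℂ) (f : ℝ → ℂ) (k : ℕ) :
    uavg (fun r => c * f r) T n k = c * uavg f T n k := by
  rw [uavg, uavg, intervalIntegral.integral_const_mul]
  simp [Complex.real_smul]; ring

lemma uidx_le (t : ℝ) : uidx T n t ≤ n := min_le_right _ _

lemma t_div_eq (hT : 0 < T) (t : ℝ) : t * (n + 1) / T = t / (T / (n + 1)) := by
  field_simp

lemma uidx_bounds (hT : 0 < T) {t : ℝ} (ht : t ∈ Set.Icc (0 : ℝ) T) :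
    (uidx T n t : ℝ) * (T / (n + 1)) ≤ t ∧
      t ≤ ((uidx T n t : ℝ) + 1) * (T / (n + 1)) := by
  have h0 : 0 < T / (n + 1 : ℝ) := hstep_pos hT n
  set q := t * (n + 1) / T with hq
  have hq0 : 0 ≤ q := div_nonneg (mul_nonneg ht.1 (by positivity)) hT.le
  have hqt : q * (T / (n + 1)) = t := by rw [hq]; field_simp
  constructor
  · have h1 : (uidx T n t : ℝ) ≤ q := by
      have : (uidx T n t : ℝ) ≤ (⌊q⌋₊ : ℝ) := by
        exact_mod_cast min_le_left ⌊q⌋₊ n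
      exact this.trans (Nat.floor_le hq0)
    nlinarith
  · by_cases hcase : ⌊q⌋₊ ≤ n
    · have hidx : uidx T n t = ⌊q⌋₊ := min_eq_left hcase
      have h2 : q < (⌊q⌋₊ : ℝ) + 1 := Nat.lt_floor_add_one q
      rw [hidx]
      nlinarith
    · have hidx : uidx T n t = n := min_eq_right (le_of_not_ge hcase)
      rw [hidx]
      have : ((n : ℝ) + 1) * (T / (n + 1)) = T := by field_simp
      rw [this]; exact ht.2

lemma uidx_eq (hT : 0 < T) {k : ℕ} (hk : k ≤ n) {t : ℝ}
    (ht : t ∈ Set.Ico ((k : ℝ) * (T / (n + 1))) (((k : ℝ) + 1) * (T / (n + 1)))) :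
    uidx T n t = k := by
  have h0 : 0 < T / (n + 1 : ℝ) := hstep_pos hT n
  set q := t * (n + 1) / T with hq
  have hqt : q = t / (T / (n + 1)) := t_div_eq hT t
  have hkq : (k : ℝ) ≤ q := by
    rw [hqt, le_div_iff₀ h0]; linarith [ht.1]
  have hqk : q < (k : ℝ) + 1 := by
    rw [hqt, div_lt_iff₀ h0]; linarith [ht.2]
  have ht0 : 0 ≤ t := le_trans (by positivity) ht.1
  have hq0 : 0 ≤ q := by
    rw [hq]
    apply div_nonneg (mul_nonneg ht0 (by positivity)) hT.le
  have hfl : ⌊q⌋₊ = k := by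
    rw [Nat.floor_eq_iff hq0]
    exact ⟨hkq, by exact_mod_cast hqk⟩
  rw [uidx, ← hq, hfl]
  exact min_eq_left hk

lemma linApprox_piece (hT : 0 < T) {f : ℝ → ℂ} {k : ℕ} (hk : k ≤ n) {t : ℝ}
    (ht : t ∈ Set.Icc ((k : ℝ) * (T / (n + 1))) (((k : ℝ) + 1) * (T / (n + 1)))) :
    linApprox f T n t = uavg f T n k +
      ((t - (k : ℝ) * (T / (n + 1))) / (T / (n + 1))) •
        (uavg f T n (min (k + 1) n) - uavg f T n k) := by
  have h0 : 0 < T / (n + 1 : ℝ) := hstep_pos hT n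
  rcases lt_or_eq_of_le ht.2 with hlt | heq
  · have hidx : uidx T n t = k := uidx_eq hT hk ⟨ht.1, hlt⟩
    rw [linApprox, hidx]
    have hc : (((k : ℝ) + 1) * (T / (n + 1)) - t) / (T / (n + 1)) =
        1 - (t - (k : ℝ) * (T / (n + 1))) / (T / (n + 1)) := by
      field_simp; ring
    rw [hc]
    set s := (t - (k : ℝ) * (T / (n + 1))) / (T / (n + 1))
    module
  · -- t = (k+1) * h
    by_cases hkn : k + 1 ≤ n
    · have hidx : uidx T n t = k + 1 := by
        apply uidx_eq hT hkn
        constructor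
        · push_cast; rw [heq]
        · push_cast; rw [heq]; nlinarith
      rw [linApprox, hidx]
      have hmin : min (k + 1) n = k + 1 := min_eq_left hkn
      have hs : (t - (k : ℝ) * (T / (n + 1))) / (T / (n + 1)) = 1 := by
        rw [heq]; field_simp; ring
      have hc1 : (((k : ℕ) + 1 : ℝ) + 1) * (T / (n + 1)) - t = T / (n + 1) := by
        rw [heq]; push_cast; ring
      have hc2 : t - (((k : ℕ) + 1 : ℕ) : ℝ) * (T / (n + 1)) = 0 := by
        rw [heq]; push_cast; ring
      rw [hmin, hs]
      push_cast
      rw [hc1]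
      have hc2' : (t - ((k : ℝ) + 1) * (T / (n + 1))) / (T / (n + 1)) = 0 := by
        rw [heq]; field_simp; ring
      rw [hc2', div_self (ne_of_gt h0)]
      module
    · -- k = n, t = T
      have hkn' : k = n := by omega
      have hTeq : t = T := by
        rw [heq, hkn']; field_simp
      have hidx : uidx T n t = n := by
        rw [uidx, hTeq]
        have h1 : T * (n + 1) / T = (n : ℝ) + 1 := by field_simp
        rw [h1]
        have h2 : ⌊(n : ℝ) + 1⌋₊ = n + 1 := by
          rw [← Nat.cast_one, ← Nat.cast_add, Nat.floor_natCast]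
        rw [h2]
        omega
      rw [linApprox, hidx, hkn']
      have hmin : min (n + 1) n = n := min_eq_right (by omega)
      rw [hmin]
      have hs : (t - (n : ℝ) * (T / (n + 1))) / (T / (n + 1)) = 1 := by
        rw [heq, hkn']; field_simp; ring
      have hc1 : ((n : ℝ) + 1) * (T / (n + 1)) - t = 0 := by
        rw [heq, hkn']; push_cast; ring
      rw [hs, hc1, zero_div]
      module

lemma lipschitzOnWith_glue {f : ℝ → ℂ} {L : NNReal} {x y z : ℝ} (hxy : x ≤ y) (hyz : y ≤ z)
    (h1 : LipschitzOnWith L f (Set.Icc x y)) (h2 : LipschitzOnWith L f (Set.Icc y z)) :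
    LipschitzOnWith L f (Set.Icc x z) := by
  rw [lipschitzOnWith_iff_dist_le_mul] at h1 h2 ⊢
  intro s hs t ht
  rcases le_total s y with hsy | hsy <;> rcases le_total t y with hty | hty
  · exact h1 s ⟨hs.1, hsy⟩ t ⟨ht.1, hty⟩
  · calc dist (f s) (f t) ≤ dist (f s) (f y) + dist (f y) (f t) := dist_triangle _ _ _
      _ ≤ L * dist s y + L * dist y t := by
          gcongr
          · exact h1 s ⟨hs.1, hsy⟩ y ⟨hxy, le_refl y⟩
          · exact h2 y ⟨le_refl y, hyz⟩ t ⟨hty, ht.2⟩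
      _ ≤ L * dist s t := by
          rw [Real.dist_eq, Real.dist_eq, Real.dist_eq,
            abs_of_nonpos (by linarith), abs_of_nonpos (by linarith),
            abs_of_nonpos (by linarith)]
          nlinarith [L.2]
  · calc dist (f s) (f t) ≤ dist (f s) (f y) + dist (f y) (f t) := dist_triangle _ _ _
      _ ≤ L * dist s y + L * dist y t := by
          gcongr
          · exact h2 s ⟨hsy, hs.2⟩ y ⟨le_refl y, hyz⟩
          · exact h1 y ⟨hxy, le_refl y⟩ t ⟨ht.1, hty⟩
      _ ≤ L * dist s t := by
          rw [Real.dist_eq, Real.dist_eq, Real.dist_eq,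
            abs_of_nonneg (by linarith), abs_of_nonneg (by linarith),
            abs_of_nonneg (by linarith)]
          nlinarith [L.2]
  · exact h2 s ⟨hsy, hs.2⟩ t ⟨hty, ht.2⟩

lemma lipschitz_piece (hT : 0 < T) {f : ℝ → ℂ} {C : ℝ} (hC : 0 ≤ C)
    (hA : ∀ j ≤ n, ‖uavg f T n j‖ ≤ C) {k : ℕ} (hk : k ≤ n) :
    LipschitzOnWith (Real.toNNReal (2 * C * ((n + 1) / T)))
      (fun t => linApprox f T n t)
      (Set.Icc ((k : ℝ) * (T / (n + 1))) (((k : ℝ) + 1) * (T / (n + 1)))) := by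
  have h0 : 0 < T / (n + 1 : ℝ) := hstep_pos hT n
  rw [lipschitzOnWith_iff_dist_le_mul]
  intro s hs t ht
  rw [linApprox_piece hT hk hs, linApprox_piece hT hk ht]
  set w := uavg f T n (min (k + 1) n) - uavg f T n k with hw
  have hwnorm : ‖w‖ ≤ 2 * C := by
    rw [hw]
    calc ‖uavg f T n (min (k + 1) n) - uavg f T n k‖
        ≤ ‖uavg f T n (min (k + 1) n)‖ + ‖uavg f T n k‖ := norm_sub_le _ _
      _ ≤ C + C := add_le_add (hA _ (min_le_right _ _)) (hA _ hk)
      _ = 2 * C := by ring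
  have hdist : dist
      (uavg f T n k + ((s - (k : ℝ) * (T / (n + 1))) / (T / (n + 1))) • w)
      (uavg f T n k + ((t - (k : ℝ) * (T / (n + 1))) / (T / (n + 1))) • w)
      = ‖((s - t) / (T / (n + 1))) • w‖ := by
    rw [dist_eq_norm]
    congr 1
    have hne := h0.ne'
    have hcoef : (s - (k : ℝ) * (T / (n + 1))) / (T / (n + 1)) -
        (t - (k : ℝ) * (T / (n + 1))) / (T / (n + 1)) = (s - t) / (T / (n + 1)) := by
      field_simp
      ring
    rw [← hcoef]
    module
  rw [hdist, norm_smul, Real.norm_eq_abs, abs_div, abs_of_pos h0]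
  have hL : (Real.toNNReal (2 * C * ((n + 1) / T)) : ℝ) = 2 * C * ((n + 1) / T) :=
    Real.coe_toNNReal _ (mul_nonneg (by linarith) (by positivity))
  rw [hL, Real.dist_eq]
  have h1 : |s - t| / (T / (n + 1)) * ‖w‖ ≤ |s - t| / (T / (n + 1)) * (2 * C) := by
    apply mul_le_mul_of_nonneg_left hwnorm (by positivity)
  have h2 : |s - t| / (T / (n + 1)) * (2 * C) = 2 * C * ((n + 1) / T) * |s - t| := by
    field_simp
  linarith

lemma lipschitz_all (hT : 0 < T) {f : ℝ → ℂ} {C : ℝ} (hC : 0 ≤ C)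
    (hA : ∀ j ≤ n, ‖uavg f T n j‖ ≤ C) :
    LipschitzOnWith (Real.toNNReal (2 * C * ((n + 1) / T)))
      (fun t => linApprox f T n t) (Set.Icc (0 : ℝ) T) := by
  have h0 : 0 < T / (n + 1 : ℝ) := hstep_pos hT n
  have key : ∀ k ≤ n, LipschitzOnWith (Real.toNNReal (2 * C * ((n + 1) / T)))
      (fun t => linApprox f T n t) (Set.Icc (0 : ℝ) (((k : ℝ) + 1) * (T / (n + 1)))) := by
    intro k
    induction k with
    | zero =>
      intro _
      have := lipschitz_piece hT hC hA (k := 0) (Nat.zero_le n)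
      simpa using this
    | succ m ih =>
      intro hm
      have hmn : m ≤ n := by omega
      have h1 := ih hmn
      have h2 := lipschitz_piece hT hC hA (k := m + 1) hm
      have hcast : ((m + 1 : ℕ) : ℝ) = (m : ℝ) + 1 := by push_cast; ring
      rw [hcast] at h2
      have := lipschitzOnWith_glue (x := (0 : ℝ)) (y := ((m : ℝ) + 1) * (T / (n + 1)))
        (z := (((m : ℝ) + 1) + 1) * (T / (n + 1))) (by positivity) (by nlinarith) h1 h2
      convert this using 2
      push_cast; ring
  have := key n (le_refl n)
  have hTeq : ((n : ℝ) + 1) * (T / (n + 1)) = T := by field_simp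
  rwa [hTeq] at this


lemma uavg_congr (hT : 0 < T) {f g : ℝ → ℂ} (hfg : Set.EqOn f g (Set.Icc (0 : ℝ) T))
    {k : ℕ} (hk : k ≤ n) : uavg f T n k = uavg g T n k := by
  rw [uavg, uavg]
  congr 1
  apply intervalIntegral.integral_congr
  intro x hx
  exact hfg (subInt_subset hT hk hx)

lemma linApprox_congr (hT : 0 < T) {f g : ℝ → ℂ} (hfg : Set.EqOn f g (Set.Icc (0 : ℝ) T))
    (t : ℝ) : linApprox f T n t = linApprox g T n t := by
  rw [linApprox, linApprox,
    uavg_congr hT hfg (uidx_le t), uavg_congr hT hfg (min_le_right _ _)]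

lemma linApprox_add {f g : ℝ → ℂ}
    (hf : ∀ k ≤ n, IntervalIntegrable f volume ((k : ℝ) * (T / (n + 1)))
      (((k : ℝ) + 1) * (T / (n + 1))))
    (hg : ∀ k ≤ n, IntervalIntegrable g volume ((k : ℝ) * (T / (n + 1)))
      (((k : ℝ) + 1) * (T / (n + 1)))) (t : ℝ) :
    linApprox (fun r => f r + g r) T n t = linApprox f T n t + linApprox g T n t := by
  rw [linApprox, linApprox, linApprox,
    uavg_add (hf _ (uidx_le t)) (hg _ (uidx_le t)),
    uavg_add (hf _ (min_le_right _ _)) (hg _ (min_le_right _ _))]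
  simp only [smul_add]
  abel

lemma linApprox_const_mul (c : ℂ) (f : ℝ → ℂ) (t : ℝ) :
    linApprox (fun r => c * f r) T n t = c * linApprox f T n t := by
  rw [linApprox, linApprox, uavg_const_mul, uavg_const_mul]
  simp only [Complex.real_smul]
  ring

lemma linApprox_conj {f : ℝ → ℂ}
    (hf : ∀ k ≤ n, IntervalIntegrable f volume ((k : ℝ) * (T / (n + 1)))
      (((k : ℝ) + 1) * (T / (n + 1)))) (t : ℝ) :
    linApprox (fun r => (starRingEnd ℂ) (f r)) T n t =
      (starRingEnd ℂ) (linApprox f T n t) := by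
  rw [linApprox, linApprox, uavg_conj (hf _ (uidx_le t)),
    uavg_conj (hf _ (min_le_right _ _))]
  have hc : ∀ (r : ℝ) (z : ℂ), r • (starRingEnd ℂ) z = (starRingEnd ℂ) (r • z) := by
    intro r z
    simp [Complex.ext_iff, Complex.smul_re, Complex.smul_im]
  rw [hc, hc, ← map_add]

lemma coeff_facts (hT : 0 < T) {t : ℝ} (ht : t ∈ Set.Icc (0 : ℝ) T) :
    0 ≤ (((uidx T n t : ℝ) + 1) * (T / (n + 1)) - t) / (T / (n + 1)) ∧
    0 ≤ (t - (uidx T n t : ℝ) * (T / (n + 1))) / (T / (n + 1)) ∧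
    (((uidx T n t : ℝ) + 1) * (T / (n + 1)) - t) / (T / (n + 1)) +
      (t - (uidx T n t : ℝ) * (T / (n + 1))) / (T / (n + 1)) = 1 := by
  have h0 : 0 < T / (n + 1 : ℝ) := hstep_pos hT n
  obtain ⟨hb1, hb2⟩ := uidx_bounds hT ht (n := n)
  refine ⟨div_nonneg (by linarith) h0.le, div_nonneg (by linarith) h0.le, ?_⟩
  field_simp
  ring

lemma linApprox_norm_le (hT : 0 < T) {f : ℝ → ℂ} {C : ℝ}
    (hA : ∀ j ≤ n, ‖uavg f T n j‖ ≤ C) {t : ℝ} (ht : t ∈ Set.Icc (0 : ℝ) T) :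
    ‖linApprox f T n t‖ ≤ C := by
  obtain ⟨hc1, hc2, hsum⟩ := coeff_facts hT ht (n := n)
  set c1 := (((uidx T n t : ℝ) + 1) * (T / (n + 1)) - t) / (T / (n + 1))
  set c2 := (t - (uidx T n t : ℝ) * (T / (n + 1))) / (T / (n + 1))
  have hA1 := hA _ (uidx_le (T := T) (n := n) t)
  have hA2 := hA _ (min_le_right (uidx T n t + 1) n)
  calc ‖linApprox f T n t‖
      ≤ ‖c1 • uavg f T n (uidx T n t)‖ + ‖c2 • uavg f T n (min (uidx T n t + 1) n)‖ :=
        norm_add_le _ _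
    _ = c1 * ‖uavg f T n (uidx T n t)‖ + c2 * ‖uavg f T n (min (uidx T n t + 1) n)‖ := by
        rw [norm_smul, norm_smul, Real.norm_eq_abs, Real.norm_eq_abs,
          abs_of_nonneg hc1, abs_of_nonneg hc2]
    _ ≤ c1 * C + c2 * C := by
        gcongr
    _ = C := by rw [← add_mul, hsum, one_mul]

lemma linApprox_re_ge (hT : 0 < T) {f : ℝ → ℂ} {c : ℝ}
    (hA : ∀ j ≤ n, c ≤ (uavg f T n j).re) {t : ℝ} (ht : t ∈ Set.Icc (0 : ℝ) T) :
    c ≤ (linApprox f T n t).re := by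
  obtain ⟨hc1, hc2, hsum⟩ := coeff_facts hT ht (n := n)
  set c1 := (((uidx T n t : ℝ) + 1) * (T / (n + 1)) - t) / (T / (n + 1))
  set c2 := (t - (uidx T n t : ℝ) * (T / (n + 1))) / (T / (n + 1))
  have hA1 := hA _ (uidx_le (T := T) (n := n) t)
  have hA2 := hA _ (min_le_right (uidx T n t + 1) n)
  have hre : (linApprox f T n t).re =
      c1 * (uavg f T n (uidx T n t)).re +
        c2 * (uavg f T n (min (uidx T n t + 1) n)).re := by
    rw [linApprox, Complex.add_re, Complex.smul_re, Complex.smul_re,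
      smul_eq_mul, smul_eq_mul]
  rw [hre]
  have h1 := mul_le_mul_of_nonneg_left hA1 hc1
  have h2 := mul_le_mul_of_nonneg_left hA2 hc2
  have h3 : c1 * c + c2 * c = c := by rw [← add_mul, hsum, one_mul]
  linarith

end FLaux

/-- If `a` is a symmetric non-autonomous closed form with constants `M, α`
(and `ω = 0`), then the piecewise linear interpolation `a_Λ^L` of its interval
averages is again a symmetric non-autonomous closed form with the same
constants `M, α`, and `t ↦ a_Λ^L(t;u,v)` is Lipschitz continuous on `[0,T]`
for all fixed `u, v ∈ V`. -/
theorem formLin_symmetric_closed_lipschitz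
    {V H : Type*} [NormedAddCommGroup V] [InnerProductSpace ℂ V] [CompleteSpace V]
    [NormedAddCommGroup H] [InnerProductSpace ℂ H] [CompleteSpace H]
    (ι : V →L[ℂ] H) (hinj : Function.Injective ι) (hdense : DenseRange ι)
    (T : ℝ) (hT : 0 < T)
    (a : ℝ → V →ₗ⋆[ℂ] V →ₗ[ℂ] ℂ)
    (M α : ℝ) (hα : 0 < α) (hM : 0 ≤ M)
    (hmeas : ∀ u v : V, Measurable fun t => a t u v)
    (hbdd : ∀ t ∈ Set.Icc (0 : ℝ) T, ∀ u v : V, ‖a t u v‖ ≤ M * ‖u‖ * ‖v‖)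
    (hcoer : ∀ t ∈ Set.Icc (0 : ℝ) T, ∀ u : V, α * ‖u‖ ^ 2 ≤ (a t u u).re)
    (hsymm : ∀ t ∈ Set.Icc (0 : ℝ) T, ∀ u v : V,
      a t u v = starRingEnd ℂ (a t v u))
    (n : ℕ) :
    (∀ t ∈ Set.Icc (0 : ℝ) T, ∃ b : V →ₗ⋆[ℂ] V →ₗ[ℂ] ℂ,
        ∀ u v : V, b u v = formLin a T n t u v) ∧
    (∀ t ∈ Set.Icc (0 : ℝ) T, ∀ u v : V,
        formLin a T n t u v = starRingEnd ℂ (formLin a T n t v u)) ∧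
    (∀ t ∈ Set.Icc (0 : ℝ) T, ∀ u v : V, ‖formLin a T n t u v‖ ≤ M * ‖u‖ * ‖v‖) ∧
    (∀ t ∈ Set.Icc (0 : ℝ) T, ∀ u : V, α * ‖u‖ ^ 2 ≤ (formLin a T n t u u).re) ∧
    (∀ u v : V, ∃ L : NNReal,
        LipschitzOnWith L (fun t => formLin a T n t u v) (Set.Icc (0 : ℝ) T)) := by
  have hInt : ∀ (u v : V), ∀ k ≤ n, IntervalIntegrable (fun r => a r u v) volume
      ((k : ℝ) * (T / (n + 1))) (((k : ℝ) + 1) * (T / (n + 1))) := fun u v k hk =>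
    FLaux.integrable_sub hT (hmeas u v) (fun s hs => hbdd s hs u v) hk
  have hnorm : ∀ (u v : V), ∀ k ≤ n, ‖uavg (fun r => a r u v) T n k‖ ≤ M * ‖u‖ * ‖v‖ :=
    fun u v k hk => FLaux.uavg_norm_le hT (fun s hs => hbdd s hs u v) hk
  refine ⟨?_, ?_, ?_, ?_, ?_⟩
  · -- sesquilinearity
    intro t _
    refine ⟨LinearMap.mk₂'ₛₗ (starRingEnd ℂ) (RingHom.id ℂ)
      (fun u v => formLin a T n t u v) ?_ ?_ ?_ ?_, fun u v => rfl⟩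
    · intro u₁ u₂ v
      have hfun : (fun r => a r (u₁ + u₂) v) =
          fun r => a r u₁ v + a r u₂ v := by
        funext r; simp
      show formLin a T n t (u₁ + u₂) v = _
      rw [formLin, hfun, FLaux.linApprox_add (hInt u₁ v) (hInt u₂ v)]
      rfl
    · intro c u v
      have hfun : (fun r => a r (c • u) v) =
          fun r => (starRingEnd ℂ) c * a r u v := by
        funext r
        simp [LinearMap.map_smulₛₗ]
      show formLin a T n t (c • u) v = _
      rw [formLin, hfun, FLaux.linApprox_const_mul]
      rfl
    · intro u v₁ v₂
      have hfun : (fun r => a r u (v₁ + v₂)) =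
          fun r => a r u v₁ + a r u v₂ := by
        funext r; simp
      show formLin a T n t u (v₁ + v₂) = _
      rw [formLin, hfun, FLaux.linApprox_add (hInt u v₁) (hInt u v₂)]
      rfl
    · intro c u v
      have hfun : (fun r => a r u (c • v)) = fun r => c * a r u v := by
        funext r; simp
      show formLin a T n t u (c • v) = _
      rw [formLin, hfun, FLaux.linApprox_const_mul]
      rfl
  · -- symmetry
    intro t _ u v
    have hcg : Set.EqOn (fun r => a r u v)
        (fun r => (starRingEnd ℂ) (a r v u)) (Set.Icc (0 : ℝ) T) := by
      intro s hs
      exact hsymm s hs u v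
    rw [formLin, FLaux.linApprox_congr hT hcg t,
      FLaux.linApprox_conj (hInt v u) t]
    rfl
  · -- boundedness
    intro t ht u v
    exact FLaux.linApprox_norm_le hT (hnorm u v) ht
  · -- coercivity
    intro t ht u
    apply FLaux.linApprox_re_ge hT _ ht
    intro j hj
    exact FLaux.uavg_re_ge hT (hmeas u u) (fun s hs => hbdd s hs u u)
      (fun s hs => hcoer s hs u) hj
  · -- Lipschitz
    intro u v
    refine ⟨Real.toNNReal (2 * (M * ‖u‖ * ‖v‖) * ((n + 1) / T)), ?_⟩
    exact FLaux.lipschitz_all hT (by positivity) (hnorm u v)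

end
end
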